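/- arXiv:2205.13615 — 6 statements merged into one kernel-verified Lean document; each statement's English description precedes it below -/
import Mathlib

section
/- Corollary 1.7: Assume the branching ratio is constant: π̄_x = ρ for all x ∈ X, with 0 < ρ < ∞. If f : X → ℝ is a bounded function which is λ-harmonic for the base chain, i.e. Σ_{y∈X} p(x,y)·f(y) = λ·f(x) for every x ∈ X, then its lift f̃(m) = ⟨m, f⟩ is λρ-harmonic for the branching kernel: for every population m ∈ M, ∫_M ⟨m', f⟩ dK(m)(m') = λ·ρ·⟨m, f⟩ (the integral being well defined since ∫_M ‖m'‖ dK(m)(m') = ρ‖m‖ < ∞). -/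
open MeasureTheory ProbabilityTheory Filter Topology
open scoped ENNReal NNReal

namespace BMC

variable {X : Type*}

/-- the population space `X →₀ ℕ` over a countable set carries the discrete σ-algebra -/
instance : MeasurableSpace (X →₀ ℕ) := ⊤

/-- size (total mass) of a population -/
def popSize (m : X →₀ ℕ) : ℕ := m.sum fun _ k => k

/-- convolution of measures on populations: pushforward of the product measure under addition -/
noncomputable def popConv (μ ν : Measure (X →₀ ℕ)) : Measure (X →₀ ℕ) :=
  (μ.prod ν).map fun p => p.1 + p.2

instance : MeasurableSingletonClass (X →₀ ℕ) := ⟨fun _ => trivial⟩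

lemma popSize_add (a b : X →₀ ℕ) : popSize (a + b) = popSize a + popSize b := by
  simpa [popSize] using Finsupp.sum_add_index' (fun _ => rfl) (fun _ m n => rfl) (f := a) (g := b)

lemma lift_add (f : X → ℝ) (a b : X →₀ ℕ) :
    ((a + b).sum fun x k => (k : ℝ) * f x)
      = (a.sum fun x k => (k : ℝ) * f x) + (b.sum fun x k => (k : ℝ) * f x) := by
  apply Finsupp.sum_add_index' (fun _ => by simp)
  intro x m n; push_cast; ring

lemma apply_le_popSize (a : X →₀ ℕ) (y : X) : a y ≤ popSize a := by
  by_cases hy : y ∈ a.support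
  · exact Finset.single_le_sum (f := fun x => a x) (fun _ _ => Nat.zero_le _) hy
  · simp [Finsupp.notMem_support_iff.mp hy]

lemma popSize_cast_tsum (a : X →₀ ℕ) [Countable X] :
    (popSize a : ℝ≥0∞) = ∑' y : X, (a y : ℝ≥0∞) := by
  rw [tsum_eq_sum (s := a.support) (fun y hy => by simp [Finsupp.notMem_support_iff.mp hy])]
  simp [popSize, Finsupp.sum]

lemma lift_cast_tsum (f : X → ℝ) (a : X →₀ ℕ) [Countable X] :
    (a.sum fun x k => (k : ℝ) * f x) = ∑' y : X, (a y : ℝ) * f y := by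
  rw [tsum_eq_sum (s := a.support) (fun y hy => by simp [Finsupp.notMem_support_iff.mp hy])]
  simp [Finsupp.sum]

lemma abs_lift_le (f : X → ℝ) (C : ℝ) (hf : ∀ x, |f x| ≤ C) (a : X →₀ ℕ) :
    |a.sum fun x k => (k : ℝ) * f x| ≤ C * popSize a := by
  classical
  have h1 : |a.sum fun x k => (k : ℝ) * f x| ≤ ∑ x ∈ a.support, |(a x : ℝ) * f x| :=
    Finset.abs_sum_le_sum_abs _ _
  have h2 : ∑ x ∈ a.support, |(a x : ℝ) * f x| ≤ ∑ x ∈ a.support, C * (a x : ℝ) := by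
    apply Finset.sum_le_sum
    intro x _
    rw [abs_mul, abs_of_nonneg (by positivity), mul_comm (C : ℝ)]
    exact mul_le_mul_of_nonneg_left (hf x) (by positivity)
  have h3 : ∑ x ∈ a.support, C * (a x : ℝ) = C * popSize a := by
    rw [← Finset.mul_sum]
    congr 1
    rw [popSize, Finsupp.sum]
    push_cast
    rfl
  linarith

/-- the lift integrates against a single branching measure to `lam * ρ * f x` -/
lemma integral_single [Countable X]
    (μ : Measure (X →₀ ℕ)) (ρ : ℝ) (hρ : 0 < ρ)
    (hBR : ∫⁻ a, (popSize a : ℝ≥0∞) ∂μ = ENNReal.ofReal ρ)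
    (f : X → ℝ) (C : ℝ) (hf : ∀ x, |f x| ≤ C)
    (lam : ℝ) (x : X)
    (hharm : ∑' y : X, ((∫⁻ a, (a y : ℝ≥0∞) ∂μ).toReal / ρ) * f y = lam * f x) :
    ∫ a, (a.sum fun z k => (k : ℝ) * f z) ∂μ = lam * ρ * f x := by
  have hC : 0 ≤ C := le_trans (abs_nonneg _) (hf x)
  have hmeas : ∀ y : X, AEMeasurable (fun a : X →₀ ℕ => (a y : ℝ≥0∞)) μ :=
    fun y => (measurable_of_countable _).aemeasurable
  have hsum : ∑' y : X, ∫⁻ a, (a y : ℝ≥0∞) ∂μ = ENNReal.ofReal ρ := by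
    rw [← lintegral_tsum hmeas]
    rw [← hBR]
    exact lintegral_congr fun a => (popSize_cast_tsum a).symm
  have hfin : ∀ y : X, ∫⁻ a, (a y : ℝ≥0∞) ∂μ ≠ ∞ := by
    intro y
    refine ne_top_of_le_ne_top (by simp) (le_trans ?_ hsum.le)
    exact ENNReal.le_tsum y
  -- rewrite the integrand as a tsum
  have hrw : ∀ a : X →₀ ℕ, (a.sum fun z k => (k : ℝ) * f z) = ∑' y : X, (a y : ℝ) * f y :=
    fun a => lift_cast_tsum f a
  have hbound : ∑' y : X, ∫⁻ a, (‖(a y : ℝ) * f y‖₊ : ℝ≥0∞) ∂μ ≠ ∞ := by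
    have h1 : ∀ y : X, ∫⁻ a, (‖(a y : ℝ) * f y‖₊ : ℝ≥0∞) ∂μ
        ≤ (∫⁻ a, (a y : ℝ≥0∞) ∂μ) * ENNReal.ofReal C := by
      intro y
      rw [← lintegral_mul_const' _ _ (by simp)]
      apply lintegral_mono
      intro a
      show (‖(a y : ℝ) * f y‖₊ : ℝ≥0∞) ≤ (a y : ℝ≥0∞) * ENNReal.ofReal C
      have h2 : (‖(a y : ℝ) * f y‖₊ : ℝ≥0∞) = ENNReal.ofReal (|(a y : ℝ)| * |f y|) := by
        rw [← abs_mul, ← Real.norm_eq_abs, ofReal_norm, enorm_eq_nnnorm]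
      rw [h2, ENNReal.ofReal_mul (abs_nonneg _)]
      gcongr
      · simp
      · exact hf y
    have hle : ∑' y : X, ∫⁻ a, (‖(a y : ℝ) * f y‖₊ : ℝ≥0∞) ∂μ
        ≤ ENNReal.ofReal ρ * ENNReal.ofReal C := by
      calc ∑' y : X, ∫⁻ a, (‖(a y : ℝ) * f y‖₊ : ℝ≥0∞) ∂μ
          ≤ ∑' y : X, (∫⁻ a, (a y : ℝ≥0∞) ∂μ) * ENNReal.ofReal C := ENNReal.tsum_le_tsum h1
        _ = ENNReal.ofReal ρ * ENNReal.ofReal C := by rw [ENNReal.tsum_mul_right, hsum]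
    exact ne_top_of_le_ne_top (ENNReal.mul_ne_top ENNReal.ofReal_ne_top ENNReal.ofReal_ne_top) hle
  have hswap : ∫ a, (∑' y : X, (a y : ℝ) * f y) ∂μ = ∑' y : X, ∫ a, (a y : ℝ) * f y ∂μ :=
    integral_tsum (fun y => (measurable_of_countable _).aestronglyMeasurable) hbound
  have hterm : ∀ y : X, ∫ a, (a y : ℝ) * f y ∂μ = (∫⁻ a, (a y : ℝ≥0∞) ∂μ).toReal * f y := by
    intro y
    rw [integral_mul_const]
    congr 1
    rw [integral_eq_lintegral_of_nonneg_ae (Filter.Eventually.of_forall fun a => by positivity)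
      (measurable_of_countable _).aestronglyMeasurable]
    congr 1
    exact lintegral_congr fun a => by simp
  calc ∫ a, (a.sum fun z k => (k : ℝ) * f z) ∂μ
      = ∫ a, (∑' y : X, (a y : ℝ) * f y) ∂μ := by exact integral_congr_ae (Filter.Eventually.of_forall hrw)
    _ = ∑' y : X, ∫ a, (a y : ℝ) * f y ∂μ := hswap
    _ = ∑' y : X, (∫⁻ a, (a y : ℝ≥0∞) ∂μ).toReal * f y := by
        exact tsum_congr hterm
    _ = ρ * ∑' y : X, ((∫⁻ a, (a y : ℝ≥0∞) ∂μ).toReal / ρ) * f y := by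
        rw [← tsum_mul_left]
        refine tsum_congr fun y => ?_
        field_simp
    _ = lam * ρ * f x := by rw [hharm]; ring

/-- Corollary 1.7. With constant branching ratio `ρ ∈ (0,∞)`, the lift of a
bounded `λ`-harmonic function of the base chain is `λρ`-harmonic for the branching kernel. -/
theorem lift_harmonic [Countable X]
    (Pibr : X → Measure (X →₀ ℕ)) (hPibr : ∀ x, IsProbabilityMeasure (Pibr x))
    (K : Kernel (X →₀ ℕ) (X →₀ ℕ)) [IsMarkovKernel K]
    (hK0 : K 0 = Measure.dirac 0)
    (hKs : ∀ x : X, K (Finsupp.single x 1) = Pibr x)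
    (hKadd : ∀ m m' : X →₀ ℕ, K (m + m') = popConv (K m) (K m'))
    (ρ : ℝ) (hρ : 0 < ρ)
    (hBR : ∀ x : X, ∫⁻ m, (popSize m : ℝ≥0∞) ∂(Pibr x) = ENNReal.ofReal ρ)
    (f : X → ℝ) (C : ℝ) (hf : ∀ x, |f x| ≤ C)
    (lam : ℝ)
    (hharm : ∀ x : X,
      ∑' y : X, ((∫⁻ m, (m y : ℝ≥0∞) ∂(Pibr x)).toReal / ρ) * f y = lam * f x)
    (m : X →₀ ℕ) :
    ∫ m', (m'.sum fun x k => (k : ℝ) * f x) ∂(K m)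
      = lam * ρ * (m.sum fun x k => (k : ℝ) * f x) := by
  classical
  rcases isEmpty_or_nonempty X with hX | hX
  · -- empty index set: every population is 0
    have hm0 : m = 0 := by ext y; exact (hX.false y).elim
    subst hm0
    rw [hK0, integral_dirac]
    simp
  obtain ⟨x0⟩ := hX
  have hC : 0 ≤ C := le_trans (abs_nonneg _) (hf x0)
  set g : (X →₀ ℕ) → ℝ := fun a => a.sum fun x k => (k : ℝ) * f x with hg
  -- decomposition of a nonzero population
  have hdec : ∀ m : X →₀ ℕ, m ≠ 0 → ∃ x : X, ∃ m' : X →₀ ℕ,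
      Finsupp.single x 1 + m' = m ∧ popSize m = 1 + popSize m' := by
    intro m hm
    obtain ⟨x, hx⟩ := Finsupp.support_nonempty_iff.mpr hm
    have hx' : m x ≠ 0 := Finsupp.mem_support_iff.mp hx
    refine ⟨x, m - Finsupp.single x 1, ?_, ?_⟩
    · ext y
      simp only [Finsupp.add_apply, Finsupp.tsub_apply]
      by_cases hxy : y = x
      · subst hxy; simp only [Finsupp.single_eq_same]; omega
      · rw [Finsupp.single_eq_of_ne' fun h => hxy h.symm]; omega
    · have h := congrArg popSize (show Finsupp.single x 1 + (m - Finsupp.single x 1) = m by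
        ext y
        simp only [Finsupp.add_apply, Finsupp.tsub_apply]
        by_cases hxy : y = x
        · subst hxy; simp only [Finsupp.single_eq_same]; omega
        · rw [Finsupp.single_eq_of_ne' fun h => hxy h.symm]; omega)
      rw [popSize_add] at h
      rw [← h]
      congr 1
      simp [popSize, Finsupp.sum_single_index]
  have hzero : ∀ m : X →₀ ℕ, popSize m = 0 → m = 0 := by
    intro m hm
    by_contra h
    obtain ⟨x, hx⟩ := Finsupp.ne_iff.mp h
    simp only [Finsupp.coe_zero, Pi.zero_apply] at hx
    have := apply_le_popSize m x
    omega
  -- size integral under K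
  have hsize : ∀ n : ℕ, ∀ m : X →₀ ℕ, popSize m = n →
      ∫⁻ a, (popSize a : ℝ≥0∞) ∂(K m) = ENNReal.ofReal ρ * (popSize m : ℝ≥0∞) := by
    intro n
    induction n using Nat.strong_induction_on with
    | _ n ih =>
      intro m hn
      rcases Nat.eq_zero_or_pos n with h0 | hpos
      · subst h0
        have hm0 : m = 0 := hzero m hn
        subst hm0
        have h00 : popSize (0 : X →₀ ℕ) = 0 := Finsupp.sum_zero_index
        rw [hK0, lintegral_dirac, h00]
        simp
      · have hm : m ≠ 0 := by
          intro h; subst h; simp [popSize] at hn; omega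
        obtain ⟨x, m', hdecomp, hsize'⟩ := hdec m hm
        have hlt : popSize m' < n := by omega
        have hKm : K m = popConv (Pibr x) (K m') := by
          rw [← hdecomp, hKadd, hKs]
        haveI := hPibr x
        haveI : IsProbabilityMeasure (K m') := inferInstance
        rw [hKm, popConv,
          lintegral_map (measurable_of_countable _) (measurable_of_countable _)]
        have hpt : ∀ p : (X →₀ ℕ) × (X →₀ ℕ), (popSize (p.1 + p.2) : ℝ≥0∞)
            = (popSize p.1 : ℝ≥0∞) + (popSize p.2 : ℝ≥0∞) := by
          intro p; rw [popSize_add]; push_cast; ring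
        rw [lintegral_congr hpt, lintegral_add_left (measurable_of_countable _)]
        have h1 : ∫⁻ p : (X →₀ ℕ) × (X →₀ ℕ), (popSize p.1 : ℝ≥0∞) ∂((Pibr x).prod (K m'))
            = ∫⁻ a, (popSize a : ℝ≥0∞) ∂(Pibr x) := by
          have h := lintegral_map (μ := (Pibr x).prod (K m'))
            (f := fun a : X →₀ ℕ => (popSize a : ℝ≥0∞)) (g := Prod.fst)
            (measurable_of_countable _) measurable_fst
          rw [Measure.map_fst_prod] at h
          simp only [measure_univ, one_smul] at h
          exact h.symm
        have h2 : ∫⁻ p : (X →₀ ℕ) × (X →₀ ℕ), (popSize p.2 : ℝ≥0∞) ∂((Pibr x).prod (K m'))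
            = ∫⁻ a, (popSize a : ℝ≥0∞) ∂(K m') := by
          have h := lintegral_map (μ := (Pibr x).prod (K m'))
            (f := fun a : X →₀ ℕ => (popSize a : ℝ≥0∞)) (g := Prod.snd)
            (measurable_of_countable _) measurable_snd
          rw [Measure.map_snd_prod] at h
          simp only [measure_univ, one_smul] at h
          exact h.symm
        rw [h1, h2, hBR x, ih _ hlt m' rfl, hsize']
        push_cast
        ring
  -- integrability of the lift under K
  have hint : ∀ m : X →₀ ℕ, Integrable g (K m) := by
    intro m
    refine ⟨(measurable_of_countable _).aestronglyMeasurable, ?_⟩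
    show ∫⁻ a, (‖g a‖₊ : ℝ≥0∞) ∂(K m) < ∞
    calc ∫⁻ a, (‖g a‖₊ : ℝ≥0∞) ∂(K m)
        ≤ ∫⁻ a, ENNReal.ofReal C * (popSize a : ℝ≥0∞) ∂(K m) := by
          apply lintegral_mono
          intro a
          show (‖g a‖₊ : ℝ≥0∞) ≤ ENNReal.ofReal C * (popSize a : ℝ≥0∞)
          have h1 : (‖g a‖₊ : ℝ≥0∞) = ENNReal.ofReal |g a| := by
            rw [← Real.norm_eq_abs, ofReal_norm, enorm_eq_nnnorm]
          rw [h1]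
          calc ENNReal.ofReal |g a| ≤ ENNReal.ofReal (C * popSize a) :=
                ENNReal.ofReal_le_ofReal (abs_lift_le f C hf a)
            _ = ENNReal.ofReal C * (popSize a : ℝ≥0∞) := by
                rw [ENNReal.ofReal_mul hC]; simp
      _ = ENNReal.ofReal C * (ENNReal.ofReal ρ * (popSize m : ℝ≥0∞)) := by
          rw [lintegral_const_mul _ (measurable_of_countable _), hsize (popSize m) m rfl]
      _ < ∞ := by
          exact ENNReal.mul_lt_top (by simp) (ENNReal.mul_lt_top (by simp) (by simp))
  -- main induction
  have main : ∀ n : ℕ, ∀ m : X →₀ ℕ, popSize m = n → ∫ a, g a ∂(K m) = lam * ρ * g m := by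
    intro n
    induction n using Nat.strong_induction_on with
    | _ n ih =>
      intro m hn
      rcases Nat.eq_zero_or_pos n with h0 | hpos
      · subst h0
        have hm0 : m = 0 := hzero m hn
        subst hm0
        rw [hK0, integral_dirac, show g 0 = 0 from Finsupp.sum_zero_index]
        ring
      · have hm : m ≠ 0 := by
          intro h; subst h
          have h00 : popSize (0 : X →₀ ℕ) = 0 := Finsupp.sum_zero_index
          omega
        obtain ⟨x, m', hdecomp, hsize'⟩ := hdec m hm
        have hlt : popSize m' < n := by omega
        have hKm : K m = popConv (Pibr x) (K m') := by
          rw [← hdecomp, hKadd, hKs]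
        haveI := hPibr x
        haveI : IsProbabilityMeasure (K m') := inferInstance
        have hint1 : Integrable g (Pibr x) := hKs x ▸ hint (Finsupp.single x 1)
        have hint2 : Integrable g (K m') := hint m'
        have hintf : Integrable (fun p : (X →₀ ℕ) × (X →₀ ℕ) => g p.1) ((Pibr x).prod (K m')) := by
          have h := (integrable_map_measure (f := Prod.fst)
            (μ := (Pibr x).prod (K m'))
            (g := g)
            (by rw [Measure.map_fst_prod]
                simpa using (measurable_of_countable g).aestronglyMeasurable)
            measurable_fst.aemeasurable).mp
          rw [Measure.map_fst_prod] at h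
          exact h (by simpa using hint1)
        have hints : Integrable (fun p : (X →₀ ℕ) × (X →₀ ℕ) => g p.2) ((Pibr x).prod (K m')) := by
          have h := (integrable_map_measure (f := Prod.snd)
            (μ := (Pibr x).prod (K m'))
            (g := g)
            (by rw [Measure.map_snd_prod]
                simpa using (measurable_of_countable g).aestronglyMeasurable)
            measurable_snd.aemeasurable).mp
          rw [Measure.map_snd_prod] at h
          exact h (by simpa using hint2)
        have hsplit : ∫ a, g a ∂(K m) = (∫ a, g a ∂(Pibr x)) + ∫ a, g a ∂(K m') := by
          rw [hKm, popConv,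
            integral_map (measurable_of_countable _).aemeasurable
              (measurable_of_countable _).aestronglyMeasurable]
          have hpt : ∀ p : (X →₀ ℕ) × (X →₀ ℕ), g (p.1 + p.2) = g p.1 + g p.2 :=
            fun p => lift_add f p.1 p.2
          rw [integral_congr_ae (Filter.Eventually.of_forall hpt),
            integral_add hintf hints]
          congr 1
          · have h := integral_map (μ := (Pibr x).prod (K m')) (φ := Prod.fst) (f := g)
              measurable_fst.aemeasurable
              (by rw [Measure.map_fst_prod]
                  simpa using (measurable_of_countable g).aestronglyMeasurable)
            rw [Measure.map_fst_prod] at h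
            simp only [measure_univ, one_smul] at h
            exact h.symm
          · have h := integral_map (μ := (Pibr x).prod (K m')) (φ := Prod.snd) (f := g)
              measurable_snd.aemeasurable
              (by rw [Measure.map_snd_prod]
                  simpa using (measurable_of_countable g).aestronglyMeasurable)
            rw [Measure.map_snd_prod] at h
            simp only [measure_univ, one_smul] at h
            exact h.symm
        have hbase : ∫ a, g a ∂(Pibr x) = lam * ρ * f x :=
          integral_single (Pibr x) ρ hρ (hBR x) f C hf lam x (hharm x)
        have hrec : ∫ a, g a ∂(K m') = lam * ρ * g m' := ih _ hlt m' rfl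
        have hgm : g m = f x + g m' := by
          rw [hg]
          simp only
          rw [← hdecomp, lift_add]
          congr 1
          simp [Finsupp.sum_single_index]
        rw [hsplit, hbase, hrec, hgm]
        ring
  exact main (popSize m) m rfl

end BMC
end

section
/- Lemma 2.5(iii): Let θ be a probability measure on ℕ with finite first moment. For every C > 0, the integral ∫₀^C R_θ(s)/s² ds is finite if and only if θ satisfies the L log L moment condition Σ_{k∈ℕ} θ(k)·k·log k < ∞. -/
open MeasureTheory Filter Topology
open scoped ENNReal NNReal

namespace BMC

/-- the remainder function `R_θ(s) = Σ_k θ(k)·ψ(s·k)`, where `ψ(t) = e^{−t} − 1 + t`,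
of a probability measure `θ` on `ℕ` -/
noncomputable def remFn (θ : Measure ℕ) (s : ℝ) : ℝ :=
  ∑' k : ℕ, (θ {k}).toReal * (Real.exp (-(s * k)) - 1 + s * k)

/-- auxiliary: the integral `∫₀^C ψ(s·k)/s² ds` -/
noncomputable def Ik (C : ℝ) (k : ℕ) : ℝ≥0∞ :=
  ∫⁻ s in Set.Ioc (0:ℝ) C, ENNReal.ofReal ((Real.exp (-(s * k)) - 1 + s * k) / s ^ 2)

lemma psi_nonneg (t : ℝ) : 0 ≤ Real.exp (-t) - 1 + t := by nlinarith [Real.add_one_le_exp (-t)]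

lemma psi_le_self (t : ℝ) (h : 0 ≤ t) : Real.exp (-t) - 1 + t ≤ t := by
  nlinarith [Real.exp_le_one_iff.mpr (neg_nonpos.mpr h)]

lemma psi_le_sq (t : ℝ) (h : 0 ≤ t) : Real.exp (-t) - 1 + t ≤ t ^ 2 := by
  rcases le_or_gt t 1 with h1 | h1
  · have := Real.abs_exp_sub_one_sub_id_le (x := -t) (by rw [abs_neg, abs_of_nonneg h]; exact h1)
    rw [abs_le] at this
    nlinarith [this.2]
  · nlinarith [psi_le_self t h]

lemma psi_ge (t : ℝ) (h : 2 ≤ t) : t / 2 ≤ Real.exp (-t) - 1 + t := by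
  nlinarith [Real.exp_nonneg (-t)]

lemma meas_psi (k : ℕ) :
    Measurable fun s : ℝ => ENNReal.ofReal ((Real.exp (-(s * k)) - 1 + s * k) / s ^ 2) := by
  fun_prop

lemma lint_c_div (c a b : ℝ) (hc : 0 ≤ c) (ha : 0 < a) (hab : a ≤ b) :
    ∫⁻ s in Set.Ioc a b, ENNReal.ofReal (c / s) =
      ENNReal.ofReal (c * (Real.log b - Real.log a)) := by
  have hb : 0 < b := lt_of_lt_of_le ha hab
  have hcont : ContinuousOn (fun s : ℝ => c / s) (Set.Icc a b) :=
    ContinuousOn.div continuousOn_const continuousOn_id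
      (fun x hx => ne_of_gt (lt_of_lt_of_le ha hx.1))
  have hint : IntegrableOn (fun s : ℝ => c / s) (Set.Ioc a b) :=
    (hcont.integrableOn_Icc).mono_set Set.Ioc_subset_Icc_self
  rw [← MeasureTheory.ofReal_integral_eq_lintegral_ofReal hint]
  · congr 1
    have h1 : ∫ s in Set.Ioc a b, c / s = c * ∫ s in Set.Ioc a b, s⁻¹ := by
      simp_rw [div_eq_mul_inv]
      exact MeasureTheory.integral_const_mul c _
    rw [h1, ← intervalIntegral.integral_of_le hab, integral_inv_of_pos ha hb,
      Real.log_div (ne_of_gt hb) (ne_of_gt ha)]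
  · filter_upwards [ae_restrict_mem measurableSet_Ioc] with s hs
    exact div_nonneg hc (ha.trans_le hs.1.le).le

lemma Ik_zero (C : ℝ) : Ik C 0 = 0 := by
  rw [Ik]; simp

lemma Ik_le (C : ℝ) (hC : 0 < C) (k : ℕ) (hk : 1 ≤ k) :
    Ik C k ≤ ENNReal.ofReal ((k : ℝ) * (1 + max (Real.log C) 0)) +
      ENNReal.ofReal ((k : ℝ) * Real.log k) := by
  have hk0 : (0:ℝ) < k := by exact_mod_cast hk
  set m : ℝ := min C (1/k) with hm
  have hm0 : 0 < m := lt_min hC (by positivity)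
  have hmC : m ≤ C := min_le_left _ _
  have hmk : m ≤ 1 / k := min_le_right _ _
  have hsplit : Set.Ioc (0:ℝ) C = Set.Ioc (0:ℝ) m ∪ Set.Ioc m C :=
    (Set.Ioc_union_Ioc_eq_Ioc hm0.le hmC).symm
  have hIk : Ik C k ≤ ENNReal.ofReal ((k:ℝ)) +
      ENNReal.ofReal ((k:ℝ) * (Real.log C - Real.log m)) := by
    rw [Ik, hsplit, lintegral_union measurableSet_Ioc (Set.Ioc_disjoint_Ioc_of_le le_rfl)]
    gcongr
    · calc ∫⁻ s in Set.Ioc (0:ℝ) m, ENNReal.ofReal ((Real.exp (-(s * k)) - 1 + s * k) / s ^ 2)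
          ≤ ∫⁻ _ in Set.Ioc (0:ℝ) m, ENNReal.ofReal ((k:ℝ)^2) := by
            refine setLIntegral_mono' measurableSet_Ioc fun s hs => ?_
            apply ENNReal.ofReal_le_ofReal
            have hs0 : 0 < s := hs.1
            rw [div_le_iff₀ (by positivity)]
            calc Real.exp (-(s * k)) - 1 + s * k ≤ (s*k)^2 := psi_le_sq _ (by positivity)
              _ = (k:ℝ)^2 * s^2 := by ring
        _ = ENNReal.ofReal ((k:ℝ)^2) * ENNReal.ofReal m := by
            rw [setLIntegral_const, Real.volume_Ioc, sub_zero]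
        _ = ENNReal.ofReal ((k:ℝ)^2 * m) := (ENNReal.ofReal_mul (by positivity)).symm
        _ ≤ ENNReal.ofReal ((k:ℝ)) := by
            apply ENNReal.ofReal_le_ofReal
            calc (k:ℝ)^2 * m ≤ (k:ℝ)^2 * (1/k) := by nlinarith
              _ = (k:ℝ) := by field_simp
    · calc ∫⁻ s in Set.Ioc m C, ENNReal.ofReal ((Real.exp (-(s * k)) - 1 + s * k) / s ^ 2)
          ≤ ∫⁻ s in Set.Ioc m C, ENNReal.ofReal ((k:ℝ) / s) := by
            refine setLIntegral_mono' measurableSet_Ioc fun s hs => ?_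
            apply ENNReal.ofReal_le_ofReal
            have hs0 : 0 < s := hm0.trans hs.1
            rw [div_le_div_iff₀ (by positivity) hs0]
            calc (Real.exp (-(s * k)) - 1 + s * k) * s ≤ (s * k) * s := by
                  have := psi_le_self (s*k) (by positivity)
                  nlinarith
              _ = (k:ℝ) * s^2 := by ring
        _ = ENNReal.ofReal ((k:ℝ) * (Real.log C - Real.log m)) :=
            lint_c_div _ _ _ (by positivity) hm0 hmC
  refine hIk.trans ?_
  have hlog : Real.log C - Real.log m ≤ max (Real.log C) 0 + Real.log k := by
    have hlogk : 0 ≤ Real.log k := Real.log_natCast_nonneg k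
    rcases min_cases C (1/k) with ⟨h1, _⟩ | ⟨h1, _⟩
    · rw [hm, h1]; simp; positivity
    · rw [hm, h1, one_div, Real.log_inv]
      have : Real.log C ≤ max (Real.log C) 0 := le_max_left _ _
      linarith
  calc ENNReal.ofReal ((k:ℝ)) + ENNReal.ofReal ((k:ℝ) * (Real.log C - Real.log m))
      ≤ ENNReal.ofReal ((k:ℝ)) + (ENNReal.ofReal ((k:ℝ) * max (Real.log C) 0) +
        ENNReal.ofReal ((k:ℝ) * Real.log k)) := by
        gcongr
        rw [← ENNReal.ofReal_add (by positivity) (by positivity)]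
        apply ENNReal.ofReal_le_ofReal
        nlinarith
    _ = ENNReal.ofReal ((k : ℝ) * (1 + max (Real.log C) 0)) +
        ENNReal.ofReal ((k : ℝ) * Real.log k) := by
        rw [← add_assoc, ← ENNReal.ofReal_add (by positivity) (by positivity)]
        ring_nf

lemma Ik_ge (C : ℝ) (hC : 0 < C) (k : ℕ) (hk : 2 ≤ C * k) :
    ENNReal.ofReal (((k:ℝ)/2) * (Real.log C - Real.log (2/k))) ≤ Ik C k := by
  have hkpos : (0:ℝ) < k := by
    by_contra h
    push_neg at h
    have : (k:ℝ) = 0 := le_antisymm h (Nat.cast_nonneg k)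
    rw [this, mul_zero] at hk; linarith
  have ha : (0:ℝ) < 2 / k := by positivity
  have haC : 2 / (k:ℝ) ≤ C := by
    rw [div_le_iff₀ hkpos]
    linarith [mul_comm C (k:ℝ)]
  calc ENNReal.ofReal (((k:ℝ)/2) * (Real.log C - Real.log (2/k)))
      = ∫⁻ s in Set.Ioc (2/(k:ℝ)) C, ENNReal.ofReal (((k:ℝ)/2) / s) :=
        (lint_c_div _ _ _ (by positivity) ha haC).symm
    _ ≤ ∫⁻ s in Set.Ioc (2/(k:ℝ)) C,
        ENNReal.ofReal ((Real.exp (-(s * k)) - 1 + s * k) / s ^ 2) := by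
        refine setLIntegral_mono' measurableSet_Ioc fun s hs => ?_
        apply ENNReal.ofReal_le_ofReal
        have hs0 : 0 < s := ha.trans hs.1
        have hsk : 2 ≤ s * k := by
          have h1 : 2 / (k:ℝ) < s := hs.1
          rw [div_lt_iff₀ hkpos] at h1
          linarith
        rw [div_le_div_iff₀ (by positivity) (by positivity)]
        calc ((k:ℝ)/2) * s^2 = (s * k / 2) * s := by ring
          _ ≤ (Real.exp (-(s * k)) - 1 + s * k) * s := by
              have := psi_ge (s*k) hsk
              nlinarith
    _ ≤ Ik C k := lintegral_mono_set (Set.Ioc_subset_Ioc_left ha.le)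

lemma tonelli (θ : Measure ℕ) [IsFiniteMeasure θ]
    (hmom : ∫⁻ k : ℕ, (k : ℝ≥0∞) ∂θ ≠ ⊤) (C : ℝ) :
    (∫⁻ s in Set.Ioc (0 : ℝ) C, ENNReal.ofReal (remFn θ s / s ^ 2)) =
      ∑' k : ℕ, θ {k} * Ik C k := by
  have hN : ∑' k : ℕ, (k : ℝ≥0∞) * θ {k} ≠ ⊤ := by
    rwa [lintegral_countable'] at hmom
  have hsum0 : Summable (fun k : ℕ => (θ {k}).toReal * (k : ℝ)) := by
    have h2 := ENNReal.summable_toReal hN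
    simpa [ENNReal.toReal_mul, mul_comm] using h2
  have hpt : ∀ s ∈ Set.Ioc (0:ℝ) C, ENNReal.ofReal (remFn θ s / s ^ 2) =
      ∑' k : ℕ, θ {k} * ENNReal.ofReal ((Real.exp (-(s * k)) - 1 + s * k) / s ^ 2) := by
    intro s hs
    have hs0 : 0 < s := hs.1
    have hnn : ∀ k : ℕ, 0 ≤ (θ {k}).toReal * (Real.exp (-(s * k)) - 1 + s * k) / s ^ 2 :=
      fun k => by
        have := psi_nonneg (s * k)
        have h2 : (0:ℝ) ≤ (θ {k}).toReal := ENNReal.toReal_nonneg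
        positivity
    have hle : ∀ k : ℕ, (θ {k}).toReal * (Real.exp (-(s * k)) - 1 + s * k) / s ^ 2 ≤
        ((θ {k}).toReal * k) * (s / s ^ 2) := by
      intro k
      have h1 := psi_le_self (s * k) (by positivity)
      have h2 : (0:ℝ) ≤ (θ {k}).toReal := ENNReal.toReal_nonneg
      rw [div_le_iff₀ (by positivity)]
      have h3 : ((θ {k}).toReal * k) * (s / s ^ 2) * s ^ 2 = (θ {k}).toReal * (s * k) := by
        field_simp
      rw [h3]
      nlinarith
    have hsummable : Summable (fun k : ℕ =>
        (θ {k}).toReal * (Real.exp (-(s * k)) - 1 + s * k) / s ^ 2) :=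
      Summable.of_nonneg_of_le hnn hle (hsum0.mul_right _)
    calc ENNReal.ofReal (remFn θ s / s ^ 2)
        = ENNReal.ofReal (∑' k : ℕ,
            (θ {k}).toReal * (Real.exp (-(s * k)) - 1 + s * k) / s ^ 2) := by
          rw [remFn, ← tsum_div_const]
      _ = ∑' k : ℕ, ENNReal.ofReal
            ((θ {k}).toReal * (Real.exp (-(s * k)) - 1 + s * k) / s ^ 2) :=
          ENNReal.ofReal_tsum_of_nonneg hnn hsummable
      _ = ∑' k : ℕ, θ {k} * ENNReal.ofReal ((Real.exp (-(s * k)) - 1 + s * k) / s ^ 2) := by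
          refine tsum_congr fun k => ?_
          rw [mul_div_assoc, ENNReal.ofReal_mul ENNReal.toReal_nonneg,
            ENNReal.ofReal_toReal (measure_ne_top θ _)]
  calc (∫⁻ s in Set.Ioc (0 : ℝ) C, ENNReal.ofReal (remFn θ s / s ^ 2))
      = ∫⁻ s in Set.Ioc (0 : ℝ) C, ∑' k : ℕ,
          θ {k} * ENNReal.ofReal ((Real.exp (-(s * k)) - 1 + s * k) / s ^ 2) :=
        setLIntegral_congr_fun_ae measurableSet_Ioc (ae_of_all _ hpt)
    _ = ∑' k : ℕ, ∫⁻ s in Set.Ioc (0 : ℝ) C,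
          θ {k} * ENNReal.ofReal ((Real.exp (-(s * k)) - 1 + s * k) / s ^ 2) :=
        lintegral_tsum fun k => ((meas_psi k).const_mul _).aemeasurable
    _ = ∑' k : ℕ, θ {k} * Ik C k :=
        tsum_congr fun k => lintegral_const_mul' _ _ (measure_ne_top θ _)

/-- Lemma 2.5(iii). For a probability measure `θ` on `ℕ` with finite first
moment and any `C > 0`, the integral `∫₀^C R_θ(s)/s² ds` is finite if and only if `θ`
satisfies the `L log L` moment condition `Σ_k θ(k)·k·log k < ∞`. -/
theorem remFn_integral_finite_iff_LlogL (θ : Measure ℕ) (hθ : IsProbabilityMeasure θ)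
    (hmom : ∫⁻ k : ℕ, (k : ℝ≥0∞) ∂θ ≠ ⊤) (C : ℝ) (hC : 0 < C) :
    (∫⁻ s in Set.Ioc (0 : ℝ) C, ENNReal.ofReal (remFn θ s / s ^ 2)) ≠ ⊤ ↔
      ∫⁻ k : ℕ, ENNReal.ofReal ((k : ℝ) * Real.log k) ∂θ ≠ ⊤ := by
  haveI := hθ
  rw [tonelli θ hmom C, lintegral_countable']
  have hN : ∑' k : ℕ, (k : ℝ≥0∞) * θ {k} ≠ ⊤ := by
    rwa [lintegral_countable'] at hmom
  constructor
  · intro hJ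
    set M : ℝ := max (Real.log (2/C)) 0 with hMdef
    have hM0 : 0 ≤ M := le_max_right _ _
    have claim : ∀ k : ℕ, ENNReal.ofReal ((k:ℝ) * Real.log k) ≤
        2 * Ik C k + (k:ℝ≥0∞) * ENNReal.ofReal M := by
      intro k
      rcases Nat.eq_zero_or_pos k with rfl | hk1
      · simp
      have hk0 : (0:ℝ) < k := by exact_mod_cast hk1
      by_cases h2 : 2 ≤ C * k
      · have hIk := Ik_ge C hC k h2
        have hCk : 2 / (k:ℝ) ≤ C := by
          rw [div_le_iff₀ hk0]; linarith [mul_comm C (k:ℝ)]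
        have hlog2k : Real.log (2/(k:ℝ)) = Real.log 2 - Real.log k :=
          Real.log_div two_ne_zero (ne_of_gt hk0)
        have hMge : Real.log 2 - Real.log C ≤ M := by
          have : Real.log (2/C) = Real.log 2 - Real.log C :=
            Real.log_div two_ne_zero (ne_of_gt hC)
          rw [hMdef]
          rw [← this]
          exact le_max_left _ _
        have hnn1 : 0 ≤ ((k:ℝ)/2) * (Real.log C - Real.log (2/k)) := by
          have := Real.log_le_log (by positivity) hCk
          nlinarith
        have hreal : (k:ℝ) * Real.log k ≤
            2 * (((k:ℝ)/2) * (Real.log C - Real.log (2/k))) + (k:ℝ) * M := by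
          rw [hlog2k]
          nlinarith
        calc ENNReal.ofReal ((k:ℝ) * Real.log k)
            ≤ ENNReal.ofReal (2 * (((k:ℝ)/2) * (Real.log C - Real.log (2/k))) + (k:ℝ) * M) :=
              ENNReal.ofReal_le_ofReal hreal
          _ = ENNReal.ofReal (2 * (((k:ℝ)/2) * (Real.log C - Real.log (2/k)))) +
              ENNReal.ofReal ((k:ℝ) * M) :=
              ENNReal.ofReal_add (by positivity) (by positivity)
          _ ≤ 2 * Ik C k + (k:ℝ≥0∞) * ENNReal.ofReal M := by
              gcongr
              · rw [ENNReal.ofReal_mul (by norm_num : (0:ℝ) ≤ 2)]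
                simp only [ENNReal.ofReal_ofNat]
                gcongr
              · rw [ENNReal.ofReal_mul hk0.le, ENNReal.ofReal_natCast]
      · push_neg at h2
        have hkle : (k:ℝ) ≤ 2 / C := by
          rw [le_div_iff₀ hC]; nlinarith [mul_comm C (k:ℝ)]
        have hlogk : Real.log k ≤ M := by
          calc Real.log k ≤ Real.log (2/C) := Real.log_le_log hk0 hkle
            _ ≤ M := le_max_left _ _
        calc ENNReal.ofReal ((k:ℝ) * Real.log k)
            ≤ ENNReal.ofReal ((k:ℝ) * M) := by
              apply ENNReal.ofReal_le_ofReal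
              have := Real.log_natCast_nonneg k
              nlinarith
          _ = (k:ℝ≥0∞) * ENNReal.ofReal M := by
              rw [ENNReal.ofReal_mul hk0.le, ENNReal.ofReal_natCast]
          _ ≤ 2 * Ik C k + (k:ℝ≥0∞) * ENNReal.ofReal M := le_add_self
    have hle : ∑' k : ℕ, ENNReal.ofReal ((k:ℝ) * Real.log k) * θ {k} ≤
        2 * (∑' k : ℕ, θ {k} * Ik C k) + ENNReal.ofReal M * ∑' k : ℕ, (k:ℝ≥0∞) * θ {k} := by
      calc ∑' k : ℕ, ENNReal.ofReal ((k:ℝ) * Real.log k) * θ {k}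
          ≤ ∑' k : ℕ, (2 * Ik C k + (k:ℝ≥0∞) * ENNReal.ofReal M) * θ {k} :=
            ENNReal.tsum_le_tsum fun k => mul_le_mul_left (claim k) _
        _ = ∑' k : ℕ, (2 * (θ {k} * Ik C k) + ENNReal.ofReal M * ((k:ℝ≥0∞) * θ {k})) :=
            tsum_congr fun k => by ring
        _ = 2 * (∑' k : ℕ, θ {k} * Ik C k) + ENNReal.ofReal M * ∑' k : ℕ, (k:ℝ≥0∞) * θ {k} := by
            rw [ENNReal.tsum_add, ENNReal.tsum_mul_left, ENNReal.tsum_mul_left]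
    exact ne_top_of_le_ne_top
      (ENNReal.add_ne_top.mpr ⟨ENNReal.mul_ne_top (by norm_num) hJ,
        ENNReal.mul_ne_top ENNReal.ofReal_ne_top hN⟩) hle
  · intro hL
    set Mc : ℝ := 1 + max (Real.log C) 0 with hMc
    have hMc0 : 0 ≤ Mc := by positivity
    have claim : ∀ k : ℕ, θ {k} * Ik C k ≤
        ENNReal.ofReal Mc * ((k:ℝ≥0∞) * θ {k}) +
          ENNReal.ofReal ((k:ℝ) * Real.log k) * θ {k} := by
      intro k
      rcases Nat.eq_zero_or_pos k with rfl | hk1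
      · simp [Ik_zero]
      have hk0 : (0:ℝ) < k := by exact_mod_cast hk1
      calc θ {k} * Ik C k
          ≤ θ {k} * (ENNReal.ofReal ((k : ℝ) * Mc) + ENNReal.ofReal ((k : ℝ) * Real.log k)) :=
            mul_le_mul_right (Ik_le C hC k hk1) _
        _ = ENNReal.ofReal Mc * ((k:ℝ≥0∞) * θ {k}) +
            ENNReal.ofReal ((k:ℝ) * Real.log k) * θ {k} := by
            rw [ENNReal.ofReal_mul hk0.le, ENNReal.ofReal_natCast]
            ring
    have hle : ∑' k : ℕ, θ {k} * Ik C k ≤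
        ENNReal.ofReal Mc * (∑' k : ℕ, (k:ℝ≥0∞) * θ {k}) +
          ∑' k : ℕ, ENNReal.ofReal ((k:ℝ) * Real.log k) * θ {k} := by
      calc ∑' k : ℕ, θ {k} * Ik C k
          ≤ ∑' k : ℕ, (ENNReal.ofReal Mc * ((k:ℝ≥0∞) * θ {k}) +
              ENNReal.ofReal ((k:ℝ) * Real.log k) * θ {k}) :=
            ENNReal.tsum_le_tsum claim
        _ = _ := by rw [ENNReal.tsum_add, ENNReal.tsum_mul_left]
    exact ne_top_of_le_ne_top
      (ENNReal.add_ne_top.mpr ⟨ENNReal.mul_ne_top ENNReal.ofReal_ne_top hN, hL⟩) hle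


end BMC
end

section
/- Proposition 4.6 (lifts of space-time harmonic functions): Assume 0 < π̄_x < ∞ for all x ∈ X. Let (f_n)_{n≥0} be a sequence of nonnegative functions f_n : X → [0,∞]. Then the lifts f̃_n(m) = ⟨m, f_n⟩ form a space-time harmonic function for the branching kernel, i.e. ∫_M ⟨m', f_{n+1}⟩ dK(m)(m') = ⟨m, f_n⟩ for all m ∈ M and n ≥ 0, if and only if f_n(x) = π̄_x · Σ_{y∈X} p(x,y)·f_{n+1}(y) for all x ∈ X and n ≥ 0. -/
open MeasureTheory ProbabilityTheory Filter Topology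
open scoped ENNReal NNReal Classical

namespace BMC

variable {X : Type*}

section Aux
variable {X : Type*}

instance inst_s11 : MeasurableSingletonClass (X →₀ ℕ) := ⟨fun _ => trivial⟩

lemma lift_add_s11 (f : X → ℝ≥0∞) (a b : X →₀ ℕ) :
    ∑' x, (((a + b) x : ℕ) : ℝ≥0∞) * f x
      = (∑' x, ((a x : ℕ) : ℝ≥0∞) * f x) + ∑' x, ((b x : ℕ) : ℝ≥0∞) * f x := by
  rw [← ENNReal.tsum_add]
  exact tsum_congr fun x => by simp [Finsupp.add_apply, add_mul]

lemma lift_single (f : X → ℝ≥0∞) (x : X) :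
    ∑' y, ((Finsupp.single x 1 y : ℕ) : ℝ≥0∞) * f y = f x := by
  rw [tsum_eq_single x]
  · simp
  · intro y hy
    simp [Finsupp.single_apply, Ne.symm hy]

lemma lintegral_popConv [Countable X] (μ ν : Measure (X →₀ ℕ))
    [IsProbabilityMeasure μ] [IsProbabilityMeasure ν] (g : (X →₀ ℕ) → ℝ≥0∞)
    (hg : ∀ a b, g (a + b) = g a + g b) :
    ∫⁻ m, g m ∂(popConv μ ν) = (∫⁻ m, g m ∂μ) + ∫⁻ m, g m ∂ν := by
  rw [popConv, lintegral_map (measurable_of_countable g) (measurable_of_countable _),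
    lintegral_prod _ ((measurable_of_countable _).aemeasurable)]
  simp only [hg]
  simp [lintegral_add_left measurable_const, lintegral_add_left (measurable_of_countable g),
    lintegral_const]

end Aux

/-- Proposition 4.6. Assume `0 < π̄_x < ∞` for all `x`. The lifts of a
sequence of nonnegative functions `f_n : X → [0,∞]` form a space-time harmonic function for
the branching kernel iff `f_n(x) = π̄_x · Σ_y p(x,y)·f_{n+1}(y)` for all `x, n`. -/
theorem lift_spaceTime_harmonic_iff [Countable X]
    (Pibr : X → Measure (X →₀ ℕ)) (hPibr : ∀ x, IsProbabilityMeasure (Pibr x))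
    (K : Kernel (X →₀ ℕ) (X →₀ ℕ)) [IsMarkovKernel K]
    (hK0 : K 0 = Measure.dirac 0)
    (hKs : ∀ x : X, K (Finsupp.single x 1) = Pibr x)
    (hKadd : ∀ m m' : X →₀ ℕ, K (m + m') = popConv (K m) (K m'))
    (hbr : ∀ x : X, 0 < ∫⁻ m, (popSize m : ℝ≥0∞) ∂(Pibr x) ∧
      ∫⁻ m, (popSize m : ℝ≥0∞) ∂(Pibr x) ≠ ⊤)
    (f : ℕ → X → ℝ≥0∞) :
    (∀ (n : ℕ) (m : X →₀ ℕ),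
        ∫⁻ m', (∑' x : X, (m' x : ℝ≥0∞) * f (n + 1) x) ∂(K m)
          = ∑' x : X, (m x : ℝ≥0∞) * f n x)
    ↔ (∀ (n : ℕ) (x : X),
        f n x = (∫⁻ m, (popSize m : ℝ≥0∞) ∂(Pibr x)) *
          ∑' y : X, ((∫⁻ m, (m y : ℝ≥0∞) ∂(Pibr x))
            / ∫⁻ m, (popSize m : ℝ≥0∞) ∂(Pibr x)) * f (n + 1) y) := by
  set pi : X → ℝ≥0∞ := fun x => ∫⁻ m, (popSize m : ℝ≥0∞) ∂(Pibr x) with hpi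
  -- rewrite RHS condition
  have hrhs : ∀ n x,
      (f n x = pi x * ∑' y : X, ((∫⁻ m, (m y : ℝ≥0∞) ∂(Pibr x)) / pi x) * f (n + 1) y)
      ↔ f n x = ∑' y : X, (∫⁻ m, (m y : ℝ≥0∞) ∂(Pibr x)) * f (n + 1) y := by
    intro n x
    rw [← ENNReal.tsum_mul_left]
    constructor <;> intro h <;> rw [h] <;> refine tsum_congr fun y => ?_
    · rw [← mul_assoc, ENNReal.mul_div_cancel (hbr x).1.ne' (hbr x).2]
    · rw [← mul_assoc, ENNReal.mul_div_cancel (hbr x).1.ne' (hbr x).2]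
  -- the integral of the lift against Pibr x
  have hint : ∀ n x, ∫⁻ m', (∑' y : X, (m' y : ℝ≥0∞) * f (n + 1) y) ∂(Pibr x)
      = ∑' y : X, (∫⁻ m, (m y : ℝ≥0∞) ∂(Pibr x)) * f (n + 1) y := by
    intro n x
    rw [lintegral_tsum fun y => (measurable_of_countable _).aemeasurable]
    exact tsum_congr fun y => lintegral_mul_const _ (measurable_of_countable _)
  constructor
  · intro H n x
    rw [hrhs, ← hint n x, ← hKs x, H n (Finsupp.single x 1), lift_single]
  · intro H n m
    have hsingle : ∀ x, ∫⁻ m', (∑' y : X, (m' y : ℝ≥0∞) * f (n + 1) y) ∂(K (Finsupp.single x 1))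
        = f n x := by
      intro x
      rw [hKs x, hint n x, ← (hrhs n x).mp (H n x)]
    have := hPibr
    have step : ∀ (x : X) (m : X →₀ ℕ),
        (∫⁻ m', (∑' y : X, (m' y : ℝ≥0∞) * f (n + 1) y) ∂(K m)
          = ∑' y : X, (m y : ℝ≥0∞) * f n y) →
        ∫⁻ m', (∑' y : X, (m' y : ℝ≥0∞) * f (n + 1) y) ∂(K (Finsupp.single x 1 + m))
          = ∑' y : X, (((Finsupp.single x 1 + m : X →₀ ℕ) y : ℕ) : ℝ≥0∞) * f n y := by
      intro x m hm
      rw [hKadd, lintegral_popConv _ _ _ (fun a b => lift_add_s11 (f (n + 1)) a b),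
        hsingle x, hm, lift_add_s11, lift_single]
    induction m using Finsupp.induction with
    | zero =>
        rw [hK0, lintegral_dirac]
        simp
    | single_add x b F hxF hb ih =>
        clear hb hxF
        induction b with
        | zero => simpa using ih
        | succ k ihk =>
            have hrw : Finsupp.single x (k + 1) + F
                = Finsupp.single x 1 + (Finsupp.single x k + F) := by
              rw [← add_assoc, ← Finsupp.single_add, add_comm 1 k]
            rw [hrw]
            exact step x _ ihk


end BMC
end

section
/- Proposition 3.2: Let X be a countable set with transition probabilities p(x,·) ∈ Prob(X), and let (K, κ) be a compact metrizable P-stationary space: K is a compact metrizable topological space and κ : X → Prob(K) satisfies κ_x = Σ_{y∈X} p(x,y)·κ_y for every x ∈ X. Then for every x ∈ X, for ℙ_x-almost every trajectory (X_n) of the Markov chain there exists a Borel probability measure κ̄ on K (depending measurably on the trajectory) such that κ_{X_n} → κ̄ in the topology of weak convergence of probability measures on K; moreover, for every continuous φ : K → ℝ and every x ∈ X, E_{ℙ_x}[∫_K φ dκ̄] = ∫_K φ dκ_x. -/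
set_option linter.unusedSectionVars false
set_option linter.unusedVariables false
set_option maxHeartbeats 1000000

open MeasureTheory Filter Topology TopologicalSpace Set
open scoped ENNReal NNReal Classical

namespace BMC

/-! ### Elementary real lemmas -/

theorem sum_min_max (δ : ℝ) (hδ : 0 < δ) :
    ∀ (N : ℕ) (c : ℝ), 0 ≤ c → c ≤ N * δ →
      ∑ k ∈ Finset.range N, min δ (max 0 (c - k * δ)) = c := by
  intro N
  induction N with
  | zero => intro c hc hc'; simp at hc' ⊢; linarith
  | succ N ih =>
    intro c hc hc'
    rw [Finset.sum_range_succ]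
    by_cases h : c ≤ N * δ
    · rw [ih c hc h]
      have : c - N * δ ≤ 0 := by linarith
      rw [max_eq_left this, min_eq_right (le_of_lt hδ)]
      ring
    · push_neg at h
      have hterm : ∀ k ∈ Finset.range N, min δ (max 0 (c - k * δ)) = δ := by
        intro k hk
        have hk' : (k : ℝ) + 1 ≤ N := by
          have := Finset.mem_range.mp hk
          exact_mod_cast Nat.succ_le_of_lt this
        have h1 : δ ≤ c - k * δ := by nlinarith
        rw [max_eq_right (by linarith), min_eq_left h1]
      rw [Finset.sum_congr rfl hterm, Finset.sum_const, Finset.card_range]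
      have h2 : max 0 (c - N * δ) = c - N * δ := max_eq_right (by linarith)
      have h3 : min δ (c - N * δ) = c - N * δ := min_eq_right (by push_cast at hc'; linarith)
      rw [h2, h3]
      simp only [nsmul_eq_mul]
      ring

theorem scale_min_max (δ t : ℝ) (hδ : 0 < δ) :
    δ * min 1 (max 0 (t / δ)) = min δ (max 0 t) := by
  rw [mul_min_of_nonneg _ _ (le_of_lt hδ), mul_one, mul_max_of_nonneg _ _ (le_of_lt hδ),
    mul_zero, mul_div_cancel₀ _ (ne_of_gt hδ)]

theorem cm_integrable {K : Type*} [TopologicalSpace K] [CompactSpace K]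
    [MeasurableSpace K] [OpensMeasurableSpace K] (ψ : C(K, ℝ)) (μ : Measure K)
    [IsFiniteMeasure μ] : Integrable (fun x => ψ x) μ := by
  refine Integrable.mono' (integrable_const ‖ψ‖) ψ.continuous.aestronglyMeasurable ?_
  exact Eventually.of_forall fun x => ψ.norm_coe_le_norm x

/-! ### Riesz-Markov-Kakutani for compact metrizable spaces -/

section RMK

variable {K : Type*} [TopologicalSpace K] [CompactSpace K] [MetrizableSpace K]
  [MeasurableSpace K] [BorelSpace K]

variable (L : C(K, ℝ) → ℝ)

/-- admissible functions for a set: nonnegative, and at least one on the set. -/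
def Adm (A : Set K) : Set C(K, ℝ) := {φ | (∀ x, 0 ≤ φ x) ∧ ∀ x ∈ A, 1 ≤ φ x}

noncomputable def lam0 (A : Set K) : ℝ := sInf (L '' Adm A)

variable (hadd : ∀ f g, L (f + g) = L f + L g)
  (hsmul : ∀ (c : ℝ) f, L (c • f) = c * L f)
  (hpos : ∀ f : C(K, ℝ), (∀ x, 0 ≤ f x) → 0 ≤ L f)
  (hone : L 1 = 1)

theorem one_mem_Adm (A : Set K) : (1 : C(K,ℝ)) ∈ Adm A :=
  ⟨fun _ => zero_le_one, fun _ _ => le_rfl⟩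

theorem Adm_nonempty (A : Set K) : (L '' Adm A).Nonempty := ⟨L 1, 1, one_mem_Adm A, rfl⟩

include hpos in
theorem Adm_bddBelow (A : Set K) : BddBelow (L '' Adm A) := by
  refine ⟨0, ?_⟩; rintro r ⟨φ, hφ, rfl⟩; exact hpos φ hφ.1

include hpos in
theorem lam0_nonneg (A : Set K) : 0 ≤ lam0 L A := by
  apply Real.sInf_nonneg
  rintro r ⟨φ, hφ, rfl⟩
  exact hpos φ hφ.1

include hpos in
theorem lam0_le {A : Set K} {φ : C(K,ℝ)} (hφ : φ ∈ Adm A) : lam0 L A ≤ L φ :=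
  csInf_le (Adm_bddBelow L hpos A) ⟨φ, hφ, rfl⟩

theorem lam0_ge {A : Set K} {c : ℝ} (hc : ∀ φ ∈ Adm A, c ≤ L φ) : c ≤ lam0 L A := by
  apply le_csInf (Adm_nonempty L A)
  rintro r ⟨φ, hφ, rfl⟩
  exact hc φ hφ

include hpos hone in
theorem lam0_le_one (A : Set K) : lam0 L A ≤ 1 := by
  simpa [hone] using lam0_le L hpos (one_mem_Adm A)

include hpos in
theorem lam0_mono {A B : Set K} (h : A ⊆ B) : lam0 L A ≤ lam0 L B := by
  apply le_csInf (Adm_nonempty L B)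
  rintro r ⟨φ, hφ, rfl⟩
  exact lam0_le L hpos ⟨hφ.1, fun x hx => hφ.2 x (h hx)⟩

include hadd hpos in
theorem L_mono {f g : C(K,ℝ)} (h : ∀ x, f x ≤ g x) : L f ≤ L g := by
  have h0 : 0 ≤ L (g - f) := hpos _ (fun x => by simpa using sub_nonneg.2 (h x))
  have : L (g - f) = L g - L f := by
    have := hadd (g - f) f
    simp only [sub_add_cancel] at this
    linarith
  linarith

include hadd hsmul in
theorem L_zero : L 0 = 0 := by simpa using hsmul 0 0

include hadd hsmul in
theorem L_map_sum {ι : Type*} (s : Finset ι) (f : ι → C(K,ℝ)) :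
    L (∑ i ∈ s, f i) = ∑ i ∈ s, L (f i) := by
  classical
  induction s using Finset.induction_on with
  | empty => simpa using L_zero L hadd hsmul
  | insert _ _ h ih => rw [Finset.sum_insert h, Finset.sum_insert h, hadd, ih]

include hadd hpos hone in
theorem lam0_univ : lam0 L (univ : Set K) = 1 := by
  refine le_antisymm (lam0_le_one L hpos hone univ) (lam0_ge L fun φ hφ => ?_)
  have := L_mono L hadd hpos (f := 1) (g := φ) (fun x => hφ.2 x (mem_univ x))
  rwa [hone] at this

include hadd hpos in
theorem lam0_union_le (A B : Set K) : lam0 L (A ∪ B) ≤ lam0 L A + lam0 L B := by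
  have key : ∀ ε > (0:ℝ), lam0 L (A ∪ B) ≤ lam0 L A + lam0 L B + 2*ε := by
    intro ε hε
    obtain ⟨a, ⟨φ, hφ, rfl⟩, hlt⟩ := Real.lt_sInf_add_pos (Adm_nonempty L A) hε
    obtain ⟨b, ⟨ψ, hψ, rfl⟩, hlt'⟩ := Real.lt_sInf_add_pos (Adm_nonempty L B) hε
    have hmem : φ + ψ ∈ Adm (A ∪ B) := by
      constructor
      · intro x; have := hφ.1 x; have := hψ.1 x; simp only [ContinuousMap.add_apply]; linarith
      · intro x hx
        rcases hx with hx | hx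
        · have := hφ.2 x hx; have := hψ.1 x; simp only [ContinuousMap.add_apply]; linarith
        · have := hψ.2 x hx; have := hφ.1 x; simp only [ContinuousMap.add_apply]; linarith
    calc lam0 L (A ∪ B) ≤ L (φ + ψ) := lam0_le L hpos hmem
    _ = L φ + L ψ := hadd _ _
    _ ≤ lam0 L A + lam0 L B + 2*ε := by unfold lam0; linarith
  by_contra h
  push_neg at h
  obtain ⟨ε, hε, hε'⟩ : ∃ ε > (0:ℝ), lam0 L A + lam0 L B + 2*ε < lam0 L (A ∪ B) :=
    ⟨(lam0 L (A ∪ B) - (lam0 L A + lam0 L B))/4, by linarith, by linarith⟩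
  exact absurd (key ε hε) (by linarith)

include hadd hpos in
theorem lam0_union_disjoint {A B : Set K} (hA : IsClosed A) (hB : IsClosed B)
    (hd : Disjoint A B) : lam0 L A + lam0 L B ≤ lam0 L (A ∪ B) := by
  obtain ⟨g, hg0, hg1, hg01⟩ := exists_continuous_zero_one_of_isClosed hA hB hd
  apply le_csInf (Adm_nonempty L (A ∪ B))
  rintro r ⟨φ, hφ, rfl⟩
  have h1 : φ * (1 - g) ∈ Adm A := by
    constructor
    · intro x
      have := (hg01 x).2; have := hφ.1 x
      simp only [ContinuousMap.mul_apply, ContinuousMap.sub_apply, ContinuousMap.one_apply]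
      nlinarith [(hg01 x).1]
    · intro x hx
      have hgx : g x = 0 := hg0 hx
      have := hφ.2 x (Or.inl hx)
      simp [ContinuousMap.mul_apply, ContinuousMap.sub_apply, hgx]
      linarith
  have h2 : φ * g ∈ Adm B := by
    constructor
    · intro x
      have := (hg01 x).1; have := hφ.1 x
      simp only [ContinuousMap.mul_apply]; nlinarith
    · intro x hx
      have hgx : g x = 1 := hg1 hx
      have := hφ.2 x (Or.inr hx)
      simp [ContinuousMap.mul_apply, hgx]; linarith
  have hsum : φ * (1 - g) + φ * g = φ := by ext x; simp; ring
  calc lam0 L A + lam0 L B ≤ L (φ * (1 - g)) + L (φ * g) :=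
        add_le_add (lam0_le L hpos h1) (lam0_le L hpos h2)
  _ = L (φ * (1 - g) + φ * g) := (hadd _ _).symm
  _ = L φ := by rw [hsum]

include hadd hpos in
noncomputable def rieszContent : Content K where
  toFun C := Real.toNNReal (lam0 L C)
  mono' C₁ C₂ h := Real.toNNReal_mono (lam0_mono L hpos h)
  sup_disjoint' C₁ C₂ hd h₁ h₂ := by
    have heq : lam0 L (↑(C₁ ⊔ C₂)) = lam0 L C₁ + lam0 L C₂ := by
      refine le_antisymm ?_ ?_
      · simpa [Compacts.coe_sup] using lam0_union_le L hadd hpos (C₁ : Set K) C₂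
      · simpa [Compacts.coe_sup] using lam0_union_disjoint L hadd hpos h₁ h₂ hd
    rw [heq, Real.toNNReal_add (lam0_nonneg L hpos _) (lam0_nonneg L hpos _)]
  sup_le' C₁ C₂ := by
    have h := lam0_union_le L hadd hpos (C₁ : Set K) C₂
    show Real.toNNReal (lam0 L ↑(C₁ ⊔ C₂)) ≤ Real.toNNReal (lam0 L ↑C₁) + Real.toNNReal (lam0 L ↑C₂)
    rw [← Real.toNNReal_add (lam0_nonneg L hpos _) (lam0_nonneg L hpos _)]
    refine Real.toNNReal_mono ?_; simpa [Compacts.coe_sup] using h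

include hadd hpos in
theorem rieszContent_apply (C : Compacts K) :
    rieszContent L hadd hpos C = Real.toNNReal (lam0 L C) := rfl

include hadd hpos in
noncomputable def rmkMeasure : Measure K := (rieszContent L hadd hpos).measure

include hone in
theorem rmkMeasure_univ : rmkMeasure L hadd hpos (univ : Set K) = 1 := by
  rw [rmkMeasure, Content.measure_apply _ MeasurableSet.univ]
  have huniv : (univ : Set K) = ((⟨univ, isOpen_univ⟩ : Opens K) : Set K) := rfl
  rw [huniv, Content.outerMeasure_opens]
  refine le_antisymm ?_ ?_
  · rw [Content.innerContent]
    refine iSup₂_le fun C hC => ?_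
    beta_reduce
    rw [rieszContent_apply]
    have h1 : Real.toNNReal (lam0 L (C : Set K)) ≤ 1 :=
      Real.toNNReal_le_one.mpr (lam0_le_one L hpos hone _)
    exact_mod_cast ENNReal.coe_le_one_iff.mpr h1
  · have h := (rieszContent L hadd hpos).le_innerContent ⟨univ, isCompact_univ⟩
      ⟨univ, isOpen_univ⟩ (subset_refl _)
    refine le_trans ?_ h
    beta_reduce
    rw [rieszContent_apply]
    simp [lam0_univ L hadd hpos hone]

include hone in
theorem rmk_isProbability : IsProbabilityMeasure (rmkMeasure L hadd hpos) :=
  ⟨rmkMeasure_univ L hadd hpos hone⟩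

include hsmul in
theorem rmkMeasure_compact_le {C : Set K} (hC : IsCompact C) {φ : C(K,ℝ)}
    (hφ0 : ∀ x, 0 ≤ φ x) (hφ1 : ∀ x ∈ C, 1 ≤ φ x) :
    rmkMeasure L hadd hpos C ≤ ENNReal.ofReal (L φ) := by
  have hLφ : 0 ≤ L φ := hpos φ hφ0
  have key : ∀ r : ℝ, 1 < r → rmkMeasure L hadd hpos C ≤ ENNReal.ofReal (r * L φ) := by
    intro r hr
    have hr0 : 0 < r := lt_trans one_pos hr
    set U : Set K := {x | r⁻¹ < φ x} with hU
    have hUopen : IsOpen U := isOpen_lt continuous_const φ.continuous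
    have hCU : C ⊆ U := fun x hx => lt_of_lt_of_le (by
      rw [inv_lt_one_iff₀]; right; exact hr) (hφ1 x hx)
    calc rmkMeasure L hadd hpos C ≤ rmkMeasure L hadd hpos U := measure_mono hCU
    _ = (rieszContent L hadd hpos).outerMeasure U :=
        Content.measure_apply (rieszContent L hadd hpos) hUopen.measurableSet
    _ = (rieszContent L hadd hpos).innerContent ⟨U, hUopen⟩ :=
        Content.outerMeasure_opens (rieszContent L hadd hpos) ⟨U, hUopen⟩
    _ ≤ ENNReal.ofReal (r * L φ) := by
        rw [Content.innerContent]
        refine iSup₂_le fun C' hC' => ?_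
        beta_reduce
        rw [rieszContent_apply]
        have hadm : r • φ ∈ Adm (C' : Set K) := by
          constructor
          · intro x; have := hφ0 x
            simp only [ContinuousMap.smul_apply, smul_eq_mul]; positivity
          · intro x hx
            have hx' : r⁻¹ < φ x := hC' hx
            simp only [ContinuousMap.smul_apply, smul_eq_mul]
            rw [← mul_inv_cancel₀ (ne_of_gt hr0)]
            exact mul_le_mul_of_nonneg_left (le_of_lt hx') (le_of_lt hr0)
        have h1 : lam0 L (C' : Set K) ≤ r * L φ := by
          have := lam0_le L hpos hadm
          rwa [hsmul] at this
        rw [ENNReal.ofReal]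
        exact_mod_cast Real.toNNReal_mono h1
  refine ENNReal.le_of_forall_pos_le_add fun ε hε _ => ?_
  have hpos' : (0:ℝ) < (ε : ℝ) / (L φ + 1) := by positivity
  set r : ℝ := 1 + (ε : ℝ) / (L φ + 1) with hrdef
  have hr : 1 < r := lt_add_of_pos_right 1 hpos'
  refine le_trans (key r hr) ?_
  have hcalc : r * L φ ≤ L φ + (ε : ℝ) := by
    have h1 : (ε:ℝ) / (L φ + 1) * L φ ≤ (ε:ℝ) := by
      rw [div_mul_eq_mul_div, div_le_iff₀ (by linarith)]
      nlinarith [ε.coe_nonneg]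
    calc r * L φ = L φ + (ε:ℝ) / (L φ + 1) * L φ := by ring
    _ ≤ L φ + (ε:ℝ) := by linarith
  calc ENNReal.ofReal (r * L φ) ≤ ENNReal.ofReal (L φ + (ε:ℝ)) := ENNReal.ofReal_le_ofReal hcalc
  _ = ENNReal.ofReal (L φ) + ENNReal.ofReal (ε:ℝ) := ENNReal.ofReal_add hLφ ε.coe_nonneg
  _ = ENNReal.ofReal (L φ) + ε := by rw [ENNReal.ofReal_coe_nnreal]

include hsmul hone in
theorem le_rmkMeasure_open {O : Set K} (hO : IsOpen O) {ψ : C(K,ℝ)}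
    (h0 : ∀ x, 0 ≤ ψ x) (h1 : ∀ x, ψ x ≤ 1) (hsupp : ∀ x, x ∉ O → ψ x = 0) :
    ENNReal.ofReal (L ψ) ≤ rmkMeasure L hadd hpos O := by
  refine ENNReal.le_of_forall_pos_le_add fun ε hε _ => ?_
  set θ : ℝ := (ε : ℝ) with hθdef
  have hθ : 0 < θ := hε
  set C : Set K := {x | θ ≤ ψ x} with hCdef
  have hCclosed : IsClosed C := isClosed_le continuous_const ψ.continuous
  have hCcomp : IsCompact C := hCclosed.isCompact
  have hCO : C ⊆ O := by
    intro x hx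
    by_contra hxO
    have := hsupp x hxO
    have hx' : θ ≤ ψ x := hx
    rw [this] at hx'; linarith
  have hkey : L ψ - θ ≤ lam0 L C := by
    refine lam0_ge L fun φ hφ => ?_
    have hpt : ∀ x, ψ x ≤ (θ • (1:C(K,ℝ)) + φ) x := by
      intro x
      simp only [ContinuousMap.add_apply, ContinuousMap.smul_apply, ContinuousMap.one_apply,
        smul_eq_mul, mul_one]
      by_cases hx : x ∈ C
      · have := hφ.2 x hx; have := h1 x; linarith
      · have hx' : ψ x < θ := by
          by_contra h'; push_neg at h'; exact hx h'
        have := hφ.1 x; linarith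
    have := L_mono L hadd hpos hpt
    rw [hadd, hsmul, hone, mul_one] at this
    linarith
  have hC_le : (ENNReal.ofReal (lam0 L C) : ℝ≥0∞) ≤ rmkMeasure L hadd hpos O := by
    rw [rmkMeasure, Content.measure_apply _ hO.measurableSet]
    have hoc : (O : Set K) = ((⟨O, hO⟩ : Opens K) : Set K) := rfl
    rw [hoc, Content.outerMeasure_opens]
    have := (rieszContent L hadd hpos).le_innerContent ⟨C, hCcomp⟩ ⟨O, hO⟩ hCO
    beta_reduce at this
    rw [rieszContent_apply] at this
    exact this
  calc ENNReal.ofReal (L ψ) ≤ ENNReal.ofReal ((L ψ - θ) + θ) := by rw [sub_add_cancel]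
  _ ≤ ENNReal.ofReal (lam0 L C + θ) :=
      ENNReal.ofReal_le_ofReal (by linarith)
  _ ≤ ENNReal.ofReal (lam0 L C) + ENNReal.ofReal θ := ENNReal.ofReal_add_le
  _ ≤ rmkMeasure L hadd hpos O + ε := by
      refine add_le_add hC_le ?_
      rw [hθdef, ENNReal.ofReal_coe_nnreal]

include hsmul hone in
theorem rmk_integral_eq01 (φ : C(K,ℝ)) (hφ0 : ∀ x, 0 ≤ φ x) (hφ1 : ∀ x, φ x ≤ 1) :
    ∫ x, φ x ∂(rmkMeasure L hadd hpos) = L φ := by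
  haveI := rmk_isProbability L hadd hpos hone
  set μ := rmkMeasure L hadd hpos with hμdef
  have key : ∀ N : ℕ, 1 ≤ N → |L φ - ∫ x, φ x ∂μ| ≤ (N : ℝ)⁻¹ := by
    intro N hN
    set δ : ℝ := (N : ℝ)⁻¹ with hδdef
    have hNpos : (0:ℝ) < N := by exact_mod_cast hN
    have hδ : 0 < δ := by positivity
    set ψ : ℕ → C(K,ℝ) := fun k =>
      ⟨fun x => min 1 (max 0 ((φ x - k * δ) / δ)),
        continuous_const.min (continuous_const.max
          ((φ.continuous.sub continuous_const).div_const δ))⟩ with hψdef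
    have hψ0 : ∀ k x, 0 ≤ ψ k x := fun k x =>
      le_min zero_le_one (le_max_left 0 _)
    have hψ1 : ∀ k x, ψ k x ≤ 1 := fun k x => min_le_left 1 _
    set Cset : ℕ → Set K := fun k => {x | (k:ℝ) * δ ≤ φ x} with hCdef
    set Oset : ℕ → Set K := fun k => {x | (k:ℝ) * δ < φ x} with hOdef
    have hCclosed : ∀ k, IsClosed (Cset k) := fun k =>
      isClosed_le continuous_const φ.continuous
    have hOopen : ∀ k, IsOpen (Oset k) := fun k =>
      isOpen_lt continuous_const φ.continuous
    have hOsubC : ∀ k, Oset k ⊆ Cset k := by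
      intro k x hx
      simp only [hOdef, hCdef, mem_setOf_eq] at hx ⊢
      exact le_of_lt hx
    set a : ℕ → ℝ := fun k => (μ (Cset k)).toReal with hadef
    have ha_nonneg : ∀ k, 0 ≤ a k := fun k => ENNReal.toReal_nonneg
    have ha_le_one : ∀ k, a k ≤ 1 := by
      intro k
      have : μ (Cset k) ≤ 1 := prob_le_one
      simpa [hadef] using ENNReal.toReal_mono ENNReal.one_ne_top this
    have hψ_adm : ∀ k, ∀ x ∈ Cset (k+1), 1 ≤ ψ k x := by
      intro k x hx
      have hx' : ((k:ℝ)+1) * δ ≤ φ x := by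
        have : ((k+1 : ℕ):ℝ) * δ ≤ φ x := hx
        push_cast at this; linarith
      have h1 : (1:ℝ) ≤ (φ x - k * δ) / δ := by
        rw [le_div_iff₀ hδ]; linarith
      refine le_min le_rfl (le_trans h1 (le_max_right 0 _))
    have hψ_supp : ∀ k, ∀ x, x ∉ Oset k → ψ k x = 0 := by
      intro k x hx
      have hx' : φ x ≤ (k:ℝ) * δ := not_lt.mp hx
      have h1 : (φ x - k * δ) / δ ≤ 0 := div_nonpos_iff.mpr (Or.inr ⟨by linarith, le_of_lt hδ⟩)
      show min 1 (max 0 ((φ x - k * δ) / δ)) = 0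
      rw [max_eq_left h1, min_eq_right zero_le_one]
    have hLψ_ge : ∀ k, a (k+1) ≤ L (ψ k) := by
      intro k
      have h := rmkMeasure_compact_le L hadd hsmul hpos (hCclosed (k+1)).isCompact
        (hψ0 k) (hψ_adm k)
      exact ENNReal.toReal_le_of_le_ofReal (hpos _ (hψ0 k)) h
    have hLψ_le : ∀ k, L (ψ k) ≤ a k := by
      intro k
      have h := le_rmkMeasure_open L hadd hsmul hpos hone (hOopen k) (hψ0 k) (hψ1 k) (hψ_supp k)
      have h2 : ENNReal.ofReal (L (ψ k)) ≤ μ (Cset k) :=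
        le_trans h (measure_mono (hOsubC k))
      exact (ENNReal.ofReal_le_iff_le_toReal (measure_ne_top μ _)).mp h2
    have hintψ_ge : ∀ k, a (k+1) ≤ ∫ x, ψ k x ∂μ := by
      intro k
      have hmeas : MeasurableSet (Cset (k+1)) := (hCclosed (k+1)).measurableSet
      have hmono : ∀ x, (Cset (k+1)).indicator (fun _ => (1:ℝ)) x ≤ ψ k x := by
        intro x
        by_cases hx : x ∈ Cset (k+1)
        · rw [indicator_of_mem hx]; exact hψ_adm k x hx
        · rw [indicator_of_notMem hx]; exact hψ0 k x
      have := integral_mono ((integrable_const (1:ℝ)).indicator hmeas)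
        (cm_integrable (ψ k) μ) hmono
      rwa [integral_indicator_const (1:ℝ) hmeas, smul_eq_mul, mul_one] at this
    have hintψ_le : ∀ k, ∫ x, ψ k x ∂μ ≤ a k := by
      intro k
      have hmeas : MeasurableSet (Oset k) := (hOopen k).measurableSet
      have hmono : ∀ x, ψ k x ≤ (Oset k).indicator (fun _ => (1:ℝ)) x := by
        intro x
        by_cases hx : x ∈ Oset k
        · rw [indicator_of_mem hx]; exact hψ1 k x
        · rw [indicator_of_notMem hx, hψ_supp k x hx]
      have := integral_mono (cm_integrable (ψ k) μ)
        ((integrable_const (1:ℝ)).indicator hmeas) hmono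
      rw [integral_indicator_const (1:ℝ) hmeas, smul_eq_mul, mul_one] at this
      exact le_trans this (ENNReal.toReal_mono (measure_ne_top μ _)
        (measure_mono (hOsubC k)))
    have hNδ : (N:ℝ) * δ = 1 := by
      rw [hδdef]; field_simp
    have hdecomp : ∀ x, φ x = ∑ k ∈ Finset.range N, δ * ψ k x := by
      intro x
      have h := sum_min_max δ hδ N (φ x) (hφ0 x) (by rw [hNδ]; exact hφ1 x)
      rw [← h]
      refine Finset.sum_congr rfl fun k _ => ?_
      have hrfl : (ψ k) x = min 1 (max 0 ((φ x - k * δ) / δ)) := rfl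
      rw [hrfl]
      exact (scale_min_max δ (φ x - k * δ) hδ).symm
    have hφeq : φ = ∑ k ∈ Finset.range N, δ • ψ k := by
      ext x
      rw [hdecomp x]
      simp [Finset.sum_apply']
    have hLφ : L φ = ∑ k ∈ Finset.range N, δ * L (ψ k) := by
      rw [hφeq, L_map_sum L hadd hsmul]
      exact Finset.sum_congr rfl fun k _ => hsmul δ (ψ k)
    have hIφ : ∫ x, φ x ∂μ = ∑ k ∈ Finset.range N, δ * ∫ x, ψ k x ∂μ := by
      have h1 : (fun x => φ x) = fun x => ∑ k ∈ Finset.range N, δ * ψ k x :=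
        funext hdecomp
      rw [h1, integral_finset_sum _ fun k _ => (cm_integrable (ψ k) μ).const_mul δ]
      refine Finset.sum_congr rfl fun k _ => ?_
      simp only [← smul_eq_mul, integral_smul]
    have habs : ∀ k ∈ Finset.range N, |L (ψ k) - ∫ x, ψ k x ∂μ| ≤ a k - a (k+1) := by
      intro k _
      have h1 := hLψ_ge k; have h2 := hLψ_le k
      have h3 := hintψ_ge k; have h4 := hintψ_le k
      rw [abs_le]; constructor <;> linarith
    calc |L φ - ∫ x, φ x ∂μ|
        = |∑ k ∈ Finset.range N, δ * (L (ψ k) - ∫ x, ψ k x ∂μ)| := by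
          rw [hLφ, hIφ, ← Finset.sum_sub_distrib]
          congr 1
          exact Finset.sum_congr rfl fun k _ => by ring
    _ ≤ ∑ k ∈ Finset.range N, |δ * (L (ψ k) - ∫ x, ψ k x ∂μ)| :=
          Finset.abs_sum_le_sum_abs _ _
    _ ≤ ∑ k ∈ Finset.range N, δ * (a k - a (k+1)) := by
          refine Finset.sum_le_sum fun k hk => ?_
          rw [abs_mul, abs_of_pos hδ]
          exact mul_le_mul_of_nonneg_left (habs k hk) (le_of_lt hδ)
    _ = δ * (a 0 - a N) := by
          rw [← Finset.mul_sum, Finset.sum_range_sub' a N]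
    _ ≤ δ := by
          have h1 := ha_le_one 0
          have h2 := ha_nonneg N
          nlinarith
  have hd : |L φ - ∫ x, φ x ∂μ| = 0 := by
    by_contra hne
    have hpos' : 0 < |L φ - ∫ x, φ x ∂μ| :=
      lt_of_le_of_ne (abs_nonneg _) (Ne.symm hne)
    obtain ⟨n, hn⟩ := exists_nat_one_div_lt hpos'
    have := key (n+1) (Nat.succ_le_succ (Nat.zero_le n))
    rw [one_div] at hn
    have hcast : ((n+1 : ℕ):ℝ) = (n:ℝ) + 1 := by push_cast; ring
    rw [hcast] at this
    linarith
  have := abs_eq_zero.mp hd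
  linarith

include hsmul hone in
theorem rmk_integral_eq (φ : C(K,ℝ)) : ∫ x, φ x ∂(rmkMeasure L hadd hpos) = L φ := by
  haveI := rmk_isProbability L hadd hpos hone
  set μ := rmkMeasure L hadd hpos with hμdef
  set c : ℝ := ‖φ‖ + 1 with hcdef
  have hc : 0 < c := by positivity
  have habs : ∀ x, |φ x| ≤ ‖φ‖ := fun x => by
    have := φ.norm_coe_le_norm x
    simpa [Real.norm_eq_abs] using this
  set φ' : C(K,ℝ) := (2*c)⁻¹ • (φ + c • 1) with hφ'def
  have hφ'x : ∀ x, φ' x = (2*c)⁻¹ * (φ x + c) := fun x => by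
    simp [hφ'def, ContinuousMap.smul_apply, ContinuousMap.add_apply]
    ring
  have h0 : ∀ x, 0 ≤ φ' x := by
    intro x
    rw [hφ'x x]
    have := (abs_le.mp (habs x)).1
    have h2 : 0 ≤ φ x + c := by simp [hcdef]; linarith
    positivity
  have h1 : ∀ x, φ' x ≤ 1 := by
    intro x
    rw [hφ'x x]
    have := (abs_le.mp (habs x)).2
    rw [inv_mul_le_iff₀ (by linarith), mul_one]
    simp [hcdef]; linarith
  have heq := rmk_integral_eq01 L hadd hsmul hpos hone φ' h0 h1
  have hLφ' : L φ' = (2*c)⁻¹ * (L φ + c) := by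
    rw [hφ'def, hsmul, hadd, hsmul, hone, mul_one]
  have hIφ' : ∫ x, φ' x ∂μ = (2*c)⁻¹ * ((∫ x, φ x ∂μ) + c) := by
    have h2 : (fun x => φ' x) = fun x => (2*c)⁻¹ * (φ x + c) := funext hφ'x
    rw [h2]
    have h3 : ∫ x, (2*c)⁻¹ * (φ x + c) ∂μ = (2*c)⁻¹ * ∫ x, (φ x + c) ∂μ := by
      simpa using integral_smul ((2*c)⁻¹) (fun x => φ x + c) (μ := μ)
    rw [h3]
    congr 1
    rw [integral_add (cm_integrable φ μ) (integrable_const c), integral_const]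
    simp
  rw [heq, hLφ'] at hIφ'
  have h2c : (2*c)⁻¹ ≠ 0 := by positivity
  field_simp at hIφ'
  linarith

include hadd hsmul hpos hone in
/-- **Riesz–Markov–Kakutani representation** (probability version). -/
theorem exists_rmk :
    ∃ μ : Measure K, IsProbabilityMeasure μ ∧ ∀ φ : C(K,ℝ), ∫ x, φ x ∂μ = L φ :=
  ⟨rmkMeasure L hadd hpos, rmk_isProbability L hadd hpos hone,
    fun φ => rmk_integral_eq L hadd hsmul hpos hone φ⟩

end RMK



section Chain

variable {X : Type*} [Countable X] [MeasurableSpace X] [MeasurableSingletonClass X]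

/-- extension of a finite path to ℕ -/
def pth (n : ℕ) (v : Fin (n+1) → X) : ℕ → X := fun k => v ⟨min k n, by omega⟩

/-- the cylinder (atom) determined by a finite path -/
def Atom (n : ℕ) (v : Fin (n+1) → X) : Set (ℕ → X) := {ω | ∀ i ≤ n, ω i = pth n v i}

theorem pth_eq (n : ℕ) (v : Fin (n+1) → X) {i : ℕ} (hi : i ≤ n) :
    pth n v i = v ⟨i, by omega⟩ := by
  unfold pth
  congr 1
  exact Fin.ext (by simp [min_eq_left hi])

/-- the projection onto the first n+1 coordinates -/
def proj (n : ℕ) : (ℕ → X) → (Fin (n+1) → X) := fun ω i => ω i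

theorem Atom_eq (n : ℕ) (v : Fin (n+1) → X) : Atom n v = proj n ⁻¹' {v} := by
  ext ω
  simp only [Atom, mem_setOf_eq, mem_preimage, mem_singleton_iff, funext_iff, proj]
  constructor
  · intro h i
    rw [h i (by omega)]
    rw [pth_eq n v (by omega : (i:ℕ) ≤ n)]
  · intro h i hi
    rw [pth_eq n v hi]
    exact h ⟨i, by omega⟩

theorem measurableSet_Atom (n : ℕ) (v : Fin (n+1) → X) : MeasurableSet (Atom n v) := by
  have : Atom n v = ⋂ i ∈ Set.Iic n, (fun ω : ℕ → X => ω i) ⁻¹' {pth n v i} := by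
    ext ω; simp [Atom, Set.mem_iInter]
  rw [this]
  exact MeasurableSet.biInter (Set.to_countable _)
    (fun i _ => measurable_pi_apply i (measurableSet_singleton _))

/-- filtration: σ-algebra generated by first n+1 coordinates -/
def Fn (n : ℕ) : MeasurableSpace (ℕ → X) := MeasurableSpace.comap (proj n) ⊤

theorem Fn_le (n : ℕ) : Fn (X := X) n ≤ MeasurableSpace.pi := by
  rintro s ⟨S, -, rfl⟩
  have : proj (X := X) n ⁻¹' S = ⋃ v : S, Atom n (v : Fin (n+1) → X) := by
    ext ω
    simp only [mem_preimage, Set.mem_iUnion]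
    constructor
    · intro h; exact ⟨⟨proj n ω, h⟩, by rw [Atom_eq]; exact rfl⟩
    · rintro ⟨⟨v, hv⟩, h⟩
      rw [Atom_eq] at h
      have : proj n ω = v := h
      rwa [this]
  rw [this]
  exact MeasurableSet.iUnion fun v => measurableSet_Atom n _

theorem Fn_mono : Monotone (Fn (X := X)) := by
  intro n m hnm
  rintro s ⟨S, -, rfl⟩
  refine ⟨(fun w : Fin (m+1) → X => fun i : Fin (n+1) => w ⟨i, by omega⟩) ⁻¹' S,
    trivial, rfl⟩

/-- the filtration -/
def ℱchain : Filtration ℕ (MeasurableSpace.pi : MeasurableSpace (ℕ → X)) where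
  seq := Fn
  mono' := Fn_mono
  le' := Fn_le

/-- extension of a finite path by one step -/
def ext1 (n : ℕ) (v : Fin (n+1) → X) (y : X) : Fin (n+2) → X :=
  fun i => if h : (i:ℕ) ≤ n then v ⟨i, by omega⟩ else y

theorem pth_ext1_le (n : ℕ) (v : Fin (n+1) → X) (y : X) {k : ℕ} (hk : k ≤ n) :
    pth (n+1) (ext1 n v y) k = pth n v k := by
  rw [pth_eq _ _ (by omega : k ≤ n+1), pth_eq _ _ hk]
  simp [ext1, hk]

theorem pth_ext1_last (n : ℕ) (v : Fin (n+1) → X) (y : X) :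
    pth (n+1) (ext1 n v y) (n+1) = y := by
  rw [pth_eq _ _ (le_refl (n+1))]
  simp [ext1]

theorem Atom_decomp (n : ℕ) (v : Fin (n+1) → X) :
    Atom n v = ⋃ y : X, Atom (n+1) (ext1 n v y) := by
  ext ω
  simp only [Set.mem_iUnion]
  constructor
  · intro h
    refine ⟨ω (n+1), fun i hi => ?_⟩
    rcases Nat.lt_or_ge i (n+1) with hlt | hge
    · rw [pth_ext1_le n v _ (by omega)]
      exact h i (by omega)
    · have : i = n + 1 := by omega
      subst this
      rw [pth_ext1_last]
  · rintro ⟨y, h⟩ i hi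
    rw [← pth_ext1_le n v y hi]
    exact h i (by omega)

theorem Atom_ext1_disjoint (n : ℕ) (v : Fin (n+1) → X) :
    Pairwise (Function.onFun Disjoint fun y : X => Atom (n+1) (ext1 n v y)) := by
  intro y y' hyy'
  refine Set.disjoint_left.mpr fun ω h1 h2 => hyy' ?_
  have e1 : ω (n+1) = y := by
    have := h1 (n+1) (le_refl _); rwa [pth_ext1_last] at this
  have e2 : ω (n+1) = y' := by
    have := h2 (n+1) (le_refl _); rwa [pth_ext1_last] at this
  rw [← e1, ← e2]

theorem Atom_disjoint (n : ℕ) :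
    Pairwise (Function.onFun Disjoint fun v : Fin (n+1) → X => Atom n v) := by
  intro v v' hvv'
  rw [Function.onFun, Atom_eq, Atom_eq]
  refine Set.disjoint_left.mpr fun ω h1 h2 => hvv' ?_
  simp only [mem_preimage, mem_singleton_iff] at h1 h2
  rw [← h1, ← h2]

theorem mem_Atom_eval {n : ℕ} {v : Fin (n+1) → X} {ω : ℕ → X} (hω : ω ∈ Atom n v)
    {m : ℕ} (hm : m ≤ n) : ω m = pth n v m := hω m hm

end Chain

section Chain2

variable {X : Type*} [Countable X] [MeasurableSpace X] [MeasurableSingletonClass X]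
variable (p : X → Measure X)
variable (P : X → Measure (ℕ → X)) (hPprob : ∀ x, IsProbabilityMeasure (P x))
variable (hP : ∀ (x : X) (n : ℕ) (path : ℕ → X),
      P x {ω | ∀ i ≤ n, ω i = path i}
        = (if path 0 = x then 1 else 0) * ∏ i ∈ Finset.range n, p (path i) {path (i + 1)})

include hP in
theorem P_Atom (x : X) (n : ℕ) (v : Fin (n+1) → X) :
    P x (Atom n v) = (if pth n v 0 = x then 1 else 0)
      * ∏ i ∈ Finset.range n, p (pth n v i) {pth n v (i + 1)} :=
  hP x n (pth n v)

include hP in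
theorem P_Atom_ext1 (x : X) (n : ℕ) (v : Fin (n+1) → X) (y : X) :
    P x (Atom (n+1) (ext1 n v y)) = P x (Atom n v) * p (pth n v n) {y} := by
  rw [P_Atom p P hP, P_Atom p P hP]
  rw [Finset.prod_range_succ]
  have h0 : pth (n+1) (ext1 n v y) 0 = pth n v 0 := pth_ext1_le n v y (Nat.zero_le n)
  have hlast : pth (n+1) (ext1 n v y) (n+1) = y := pth_ext1_last n v y
  have hn : pth (n+1) (ext1 n v y) n = pth n v n := pth_ext1_le n v y (le_refl n)
  have hprod : ∏ i ∈ Finset.range n, p (pth (n+1) (ext1 n v y) i) {pth (n+1) (ext1 n v y) (i+1)}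
      = ∏ i ∈ Finset.range n, p (pth n v i) {pth n v (i+1)} := by
    refine Finset.prod_congr rfl fun i hi => ?_
    have hi' := Finset.mem_range.mp hi
    rw [pth_ext1_le n v y (by omega), pth_ext1_le n v y (by omega)]
  rw [h0, hlast, hn, hprod, mul_assoc]

variable (g : X → ℝ) (c : ℝ)
variable (hharm : ∀ z, g z = ∑' y, (p z {y}).toReal * g y)
variable (hbdd : ∀ z, |g z| ≤ c)

include hPprob hbdd in
theorem integrable_eval (x : X) (m : ℕ) : Integrable (fun ω => g (ω m)) (P x) := by
  haveI := hPprob x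
  have hmeas : Measurable fun ω : ℕ → X => g (ω m) :=
    (measurable_of_countable g).comp (measurable_pi_apply m)
  refine Integrable.mono' (integrable_const c) hmeas.aestronglyMeasurable ?_
  exact Eventually.of_forall fun ω => by
    rw [Real.norm_eq_abs]; exact hbdd (ω m)

theorem setInt_atom (x : X) (n : ℕ) (v : Fin (n+1) → X) {m : ℕ} (hm : m ≤ n) :
    ∫ ω in Atom n v, g (ω m) ∂(P x) = g (pth n v m) * (P x (Atom n v)).toReal := by
  rw [setIntegral_congr_fun (measurableSet_Atom n v)
    (fun ω hω => by show g (ω m) = g (pth n v m); rw [mem_Atom_eval hω hm] :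
      EqOn (fun ω : ℕ → X => g (ω m))
      (fun _ => g (pth n v m)) (Atom n v)), setIntegral_const, smul_eq_mul, mul_comm, measureReal_def]

include hPprob hP hharm hbdd in
theorem setInt_atom_succ (x : X) (n : ℕ) (v : Fin (n+1) → X) :
    ∫ ω in Atom n v, g (ω (n+1)) ∂(P x)
      = g (pth n v n) * (P x (Atom n v)).toReal := by
  haveI := hPprob x
  rw [Atom_decomp n v]
  rw [integral_iUnion (fun y => measurableSet_Atom (n+1) (ext1 n v y))
    (Atom_ext1_disjoint n v)
    ((integrable_eval P hPprob g c hbdd x (n+1)).integrableOn)]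
  have hterm : ∀ y : X, ∫ ω in Atom (n+1) (ext1 n v y), g (ω (n+1)) ∂(P x)
      = (P x (Atom n v)).toReal * ((p (pth n v n) {y}).toReal * g y) := by
    intro y
    rw [setInt_atom P g x (n+1) (ext1 n v y) (le_refl (n+1)), pth_ext1_last,
      P_Atom_ext1 p P hP, ENNReal.toReal_mul]
    ring
  rw [tsum_congr hterm, tsum_mul_left, ← hharm (pth n v n), ← Atom_decomp n v]
  ring

include hPprob hP hharm hbdd in
theorem setInt_step (x : X) (n : ℕ) {s : Set (ℕ → X)} (hs : MeasurableSet[Fn n] s) :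
    ∫ ω in s, g (ω n) ∂(P x) = ∫ ω in s, g (ω (n+1)) ∂(P x) := by
  haveI := hPprob x
  obtain ⟨S, -, rfl⟩ := hs
  have hdecomp : proj (X := X) n ⁻¹' S = ⋃ v : S, Atom n (v : Fin (n+1) → X) := by
    ext ω
    simp only [mem_preimage, Set.mem_iUnion]
    constructor
    · intro h; exact ⟨⟨proj n ω, h⟩, by rw [Atom_eq]; exact rfl⟩
    · rintro ⟨⟨v, hv⟩, h⟩
      rw [Atom_eq] at h
      have : proj n ω = v := h
      rwa [this]
  have hdisj : Pairwise (Function.onFun Disjoint fun v : S => Atom n (v : Fin (n+1) → X)) :=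
    fun a b hab => Atom_disjoint n (fun h => hab (Subtype.ext h))
  rw [hdecomp]
  rw [integral_iUnion (fun v => measurableSet_Atom n _) hdisj
    ((integrable_eval P hPprob g c hbdd x n).integrableOn),
    integral_iUnion (fun v => measurableSet_Atom n _) hdisj
    ((integrable_eval P hPprob g c hbdd x (n+1)).integrableOn)]
  refine tsum_congr fun v => ?_
  rw [setInt_atom P g x n _ (le_refl n),
    setInt_atom_succ p P hPprob hP g c hharm hbdd x n _]

include hPprob hP hharm hbdd in
theorem martingale_eval (x : X) :
    Martingale (fun n (ω : ℕ → X) => g (ω n)) ℱchain (P x) := by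
  haveI := hPprob x
  refine martingale_of_setIntegral_eq_succ ?_ (fun n => integrable_eval P hPprob g c hbdd x n)
    (fun i s hs => setInt_step p P hPprob hP g c hharm hbdd x i hs)
  intro n
  have hproj : @Measurable _ _ (Fn n) ⊤ (proj (X := X) n) := fun s _ => ⟨s, trivial, rfl⟩
  have heval : @Measurable _ _ (Fn (X := X) n) _ (fun ω => ω n) := by
    have h2 : @Measurable _ _ (⊤ : MeasurableSpace (Fin (n+1) → X)) _
        (fun w : Fin (n+1) → X => w ⟨n, n.lt_succ_self⟩) := measurable_from_top
    exact h2.comp hproj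
  exact ((measurable_of_countable g).comp heval).stronglyMeasurable

include hPprob hP hharm hbdd in
theorem integral_eval_const (x : X) (n : ℕ) : ∫ ω, g (ω n) ∂(P x) = g x := by
  haveI := hPprob x
  induction n with
  | zero =>
    have hx0 : P x {ω | ω 0 = x} = 1 := by
      have h := hP x 0 (fun _ => x)
      have hset : {ω : ℕ → X | ∀ i ≤ 0, ω i = x} = {ω : ℕ → X | ω 0 = x} := by
        ext ω
        simp only [mem_setOf_eq, Nat.le_zero]
        constructor
        · intro h'; exact h' 0 rfl
        · intro h' i hi; rw [hi]; exact h'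
      rw [hset] at h
      simpa using h
    have hmeas : MeasurableSet {ω : ℕ → X | ω 0 = x} := by
      have : {ω : ℕ → X | ω 0 = x} = (fun ω : ℕ → X => ω 0) ⁻¹' {x} := rfl
      rw [this]
      exact measurable_pi_apply 0 (measurableSet_singleton x)
    have hae : ∀ᵐ ω ∂(P x), ω 0 = x := by
      rw [ae_iff]
      have : {ω : ℕ → X | ¬ ω 0 = x} = {ω : ℕ → X | ω 0 = x}ᶜ := rfl
      rw [this, measure_compl hmeas (measure_ne_top _ _), hx0, measure_univ]
      simp
    calc ∫ ω, g (ω 0) ∂(P x) = ∫ _ω, g x ∂(P x) :=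
          integral_congr_ae (hae.mono fun ω hω => by show g (ω 0) = g x; rw [hω])
    _ = g x := by simp
  | succ n ih =>
    rw [← ih]
    have := setInt_step p P hPprob hP g c hharm hbdd x n (MeasurableSet.univ)
    simpa [setIntegral_univ] using this.symm

end Chain2

/-! ### Main theorem -/

/-- Proposition 3.2. For a Markov chain on a countable state space and a
compact metrizable `P`-stationary space `(K, κ)`, for every starting point `x`, almost every
trajectory admits a weak* limit `κ̄` of the measures `κ_{X_n}`, depending measurably on the
trajectory, and the barycentre of `κ̄` under `ℙ_x` is `κ_x`. -/
theorem stationary_space_convergence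
    {X : Type*} [Countable X] [MeasurableSpace X] [MeasurableSingletonClass X]
    (p : X → Measure X) (hp : ∀ x, IsProbabilityMeasure (p x))
    (K : Type*) [TopologicalSpace K] [CompactSpace K] [MetrizableSpace K]
    [MeasurableSpace K] [BorelSpace K]
    (κ : X → Measure K) (hκprob : ∀ x, IsProbabilityMeasure (κ x))
    -- stationarity: κ_x = Σ_y p(x,y)·κ_y
    (hstat : ∀ (x : X) (s : Set K), MeasurableSet s →
      κ x s = ∑' y : X, p x {y} * κ y s)
    -- ℙ_x : law of the chain started at x (Ionescu–Tulcea), via cylinder probabilities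
    (P : X → Measure (ℕ → X)) (hPprob : ∀ x, IsProbabilityMeasure (P x))
    (hP : ∀ (x : X) (n : ℕ) (path : ℕ → X),
      P x {ω | ∀ i ≤ n, ω i = path i}
        = (if path 0 = x then 1 else 0) * ∏ i ∈ Finset.range n, p (path i) {path (i + 1)}) :
    ∃ κbar : (ℕ → X) → Measure K,
      -- measurable dependence on the trajectory
      (∀ φ : C(K, ℝ), Measurable fun ω => ∫ ξ, φ ξ ∂(κbar ω)) ∧
      ∀ x : X,
        -- a.s. weak* convergence κ_{X_n} → κ̄
        (∀ᵐ ω ∂(P x), IsProbabilityMeasure (κbar ω) ∧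
          ∀ φ : C(K, ℝ),
            Tendsto (fun n => ∫ ξ, φ ξ ∂(κ (ω n))) atTop (𝓝 (∫ ξ, φ ξ ∂(κbar ω)))) ∧
        -- barycentre identity: E_x[⟨κ̄, φ⟩] = ⟨κ_x, φ⟩
        (∀ φ : C(K, ℝ),
          ∫ ω, (∫ ξ, φ ξ ∂(κbar ω)) ∂(P x) = ∫ ξ, φ ξ ∂(κ x)) := by
  classical
  rcases isEmpty_or_nonempty X with hX | hX
  · -- trivial case: X is empty
    haveI : IsEmpty (ℕ → X) := ⟨fun ω => hX.false (ω 0)⟩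
    refine ⟨fun ω => isEmptyElim ω, fun φ => ?_, fun x => isEmptyElim x⟩
    exact measurable_of_empty _
  obtain ⟨x₀⟩ := hX
  -- the barycentre functions
  set fI : C(K,ℝ) → X → ℝ := fun φ z => ∫ ξ, φ ξ ∂(κ z) with hfI
  have hbdd : ∀ (φ : C(K,ℝ)) (z : X), |fI φ z| ≤ ‖φ‖ := by
    intro φ z
    haveI := hκprob z
    have h := norm_integral_le_of_norm_le_const (μ := κ z) (f := fun ξ => φ ξ) (C := ‖φ‖)
      (Eventually.of_forall fun ξ => φ.norm_coe_le_norm ξ)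
    rw [probReal_univ] at h
    simpa [Real.norm_eq_abs] using h
  have hharm : ∀ (φ : C(K,ℝ)) (z : X), fI φ z = ∑' y, (p z {y}).toReal * fI φ y := by
    intro φ z
    haveI := hκprob z
    have hsum : κ z = Measure.sum (fun y => p z {y} • κ y) := by
      ext s hs
      rw [Measure.sum_apply _ hs]
      simp only [Measure.smul_apply, smul_eq_mul]
      exact hstat z s hs
    have hint : Integrable (fun ξ => φ ξ) (κ z) := cm_integrable φ (κ z)
    calc fI φ z = ∫ ξ, φ ξ ∂(Measure.sum fun y => p z {y} • κ y) := by rw [← hsum]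
    _ = ∑' y, ∫ ξ, φ ξ ∂(p z {y} • κ y) := integral_sum_measure (hsum ▸ hint)
    _ = ∑' y, (p z {y}).toReal * fI φ y := by
        refine tsum_congr fun y => ?_
        rw [integral_smul_measure, smul_eq_mul]
  have hadd_fI : ∀ (φ ψ : C(K,ℝ)) (z : X), fI (φ + ψ) z = fI φ z + fI ψ z := by
    intro φ ψ z
    haveI := hκprob z
    simp only [hfI, ContinuousMap.add_apply]
    exact integral_add (cm_integrable φ (κ z)) (cm_integrable ψ (κ z))
  have hsmul_fI : ∀ (a : ℝ) (φ : C(K,ℝ)) (z : X), fI (a • φ) z = a * fI φ z := by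
    intro a φ z
    haveI := hκprob z
    simp only [hfI, ContinuousMap.smul_apply, smul_eq_mul]
    simpa using integral_smul a (fun ξ => φ ξ) (μ := κ z)
  have hone_fI : ∀ z : X, fI 1 z = 1 := by
    intro z
    haveI := hκprob z
    simp [hfI]
  have hLip : ∀ (φ ψ : C(K,ℝ)) (z : X), |fI φ z - fI ψ z| ≤ dist φ ψ := by
    intro φ ψ z
    haveI := hκprob z
    have hsub : fI φ z - fI ψ z = fI (φ - ψ) z := by
      simp only [hfI, ContinuousMap.sub_apply]
      rw [integral_sub (cm_integrable φ (κ z)) (cm_integrable ψ (κ z))]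
    rw [hsub, dist_eq_norm]
    exact hbdd (φ - ψ) z
  -- dense sequence in C(K, ℝ)
  haveI : Nonempty C(K,ℝ) := ⟨1⟩
  obtain ⟨u, hu⟩ := TopologicalSpace.exists_dense_seq C(K,ℝ)
  -- the good set
  set G : Set (ℕ → X) :=
    ⋂ i : ℕ, {ω | ∃ c, Tendsto (fun n => fI (u i) (ω n)) atTop (𝓝 c)} with hGdef
  have hGmeas : MeasurableSet G :=
    MeasurableSet.iInter fun i => measurableSet_exists_tendsto
      (fun n => (measurable_of_countable (fI (u i))).comp (measurable_pi_apply n))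
  -- on the good set, all test functions converge
  have hGconv : ∀ ω ∈ G, ∀ φ : C(K,ℝ),
      ∃ c, Tendsto (fun n => fI φ (ω n)) atTop (𝓝 c) := by
    intro ω hω φ
    apply cauchySeq_tendsto_of_complete
    rw [Metric.cauchySeq_iff]
    intro ε hε
    obtain ⟨i, hi⟩ := Metric.denseRange_iff.mp hu φ (ε/3) (by linarith)
    obtain ⟨ci, hci⟩ := mem_iInter.mp hω i
    obtain ⟨N, hN⟩ := Metric.cauchySeq_iff.mp hci.cauchySeq (ε/3) (by linarith)
    refine ⟨N, fun m hm n hn => ?_⟩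
    have h1 : dist (fI φ (ω m)) (fI (u i) (ω m)) < ε/3 :=
      lt_of_le_of_lt (by rw [Real.dist_eq]; exact hLip φ (u i) (ω m)) hi
    have h2 : dist (fI (u i) (ω m)) (fI (u i) (ω n)) < ε/3 := hN m hm n hn
    have h3 : dist (fI (u i) (ω n)) (fI φ (ω n)) < ε/3 := by
      rw [dist_comm]
      exact lt_of_le_of_lt (by rw [Real.dist_eq]; exact hLip φ (u i) (ω n)) hi
    calc dist (fI φ (ω m)) (fI φ (ω n))
        ≤ dist (fI φ (ω m)) (fI (u i) (ω m)) + dist (fI (u i) (ω m)) (fI (u i) (ω n))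
          + dist (fI (u i) (ω n)) (fI φ (ω n)) := dist_triangle4 _ _ _ _
    _ < ε/3 + ε/3 + ε/3 := by linarith
    _ = ε := by ring
  -- the limit functional
  set Lf : (ℕ → X) → C(K,ℝ) → ℝ :=
    fun ω φ => limUnder atTop (fun n => fI φ (ω n)) with hLfdef
  have hLf_tendsto : ∀ ω ∈ G, ∀ φ : C(K,ℝ),
      Tendsto (fun n => fI φ (ω n)) atTop (𝓝 (Lf ω φ)) := by
    intro ω hω φ
    obtain ⟨cφ, hcφ⟩ := hGconv ω hω φ
    have : Lf ω φ = cφ := hcφ.limUnder_eq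
    rwa [this]
  -- RMK representation of the limit functional
  have hex : ∀ ω ∈ G, ∃ μ : Measure K, IsProbabilityMeasure μ ∧
      ∀ φ : C(K,ℝ), ∫ ξ, φ ξ ∂μ = Lf ω φ := by
    intro ω hω
    refine exists_rmk (Lf ω) ?_ ?_ ?_ ?_
    · intro φ ψ
      refine tendsto_nhds_unique (hLf_tendsto ω hω (φ + ψ)) ?_
      have h : (fun n => fI (φ + ψ) (ω n)) = fun n => fI φ (ω n) + fI ψ (ω n) :=
        funext fun n => hadd_fI φ ψ (ω n)
      rw [h]
      exact (hLf_tendsto ω hω φ).add (hLf_tendsto ω hω ψ)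
    · intro a φ
      refine tendsto_nhds_unique (hLf_tendsto ω hω (a • φ)) ?_
      have h : (fun n => fI (a • φ) (ω n)) = fun n => a * fI φ (ω n) :=
        funext fun n => hsmul_fI a φ (ω n)
      rw [h]
      exact (hLf_tendsto ω hω φ).const_mul a
    · intro φ hφ
      refine ge_of_tendsto (hLf_tendsto ω hω φ) (Eventually.of_forall fun n => ?_)
      exact integral_nonneg fun ξ => hφ ξ
    · refine tendsto_nhds_unique (hLf_tendsto ω hω 1) ?_
      have h : (fun n => fI 1 (ω n)) = fun _ => (1:ℝ) := funext fun n => hone_fI (ω n)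
      rw [h]
      exact tendsto_const_nhds
  -- the limit measure
  set κbar : (ℕ → X) → Measure K :=
    fun ω => if hω : ω ∈ G then (hex ω hω).choose else κ x₀ with hκbardef
  have hκbar_prob : ∀ (ω) (hω : ω ∈ G), IsProbabilityMeasure (κbar ω) := by
    intro ω hω
    rw [hκbardef]
    simp only [dif_pos hω]
    exact (hex ω hω).choose_spec.1
  have hκbar_int : ∀ (ω) (hω : ω ∈ G) (φ : C(K,ℝ)), ∫ ξ, φ ξ ∂(κbar ω) = Lf ω φ := by
    intro ω hω φ
    rw [hκbardef]
    simp only [dif_pos hω]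
    exact (hex ω hω).choose_spec.2 φ
  have hκbar_notG : ∀ (ω), ω ∉ G → κbar ω = κ x₀ := by
    intro ω hω
    rw [hκbardef]
    simp only [dif_neg hω]
  refine ⟨κbar, ?_, ?_⟩
  · -- measurability
    intro φ
    have heq : (fun ω => ∫ ξ, φ ξ ∂(κbar ω))
        = G.piecewise (fun ω => liminf (fun n => fI φ (ω n)) atTop)
          (fun _ => fI φ x₀) := by
      funext ω
      by_cases hω : ω ∈ G
      · rw [Set.piecewise_eq_of_mem _ _ _ hω, hκbar_int ω hω φ,
          ← (hLf_tendsto ω hω φ).liminf_eq]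
      · rw [Set.piecewise_eq_of_notMem _ _ _ hω, hκbar_notG ω hω]
    rw [heq]
    exact Measurable.piecewise hGmeas
      (Measurable.liminf fun n =>
        (measurable_of_countable (fI φ)).comp (measurable_pi_apply n))
      measurable_const
  · intro x
    haveI := hPprob x
    -- the good set has full measure
    have hGae : ∀ᵐ ω ∂(P x), ω ∈ G := by
      have hall : ∀ i : ℕ, ∀ᵐ ω ∂(P x),
          ∃ c, Tendsto (fun n => fI (u i) (ω n)) atTop (𝓝 c) := by
        intro i
        have hmart := martingale_eval p P hPprob hP (fI (u i)) ‖u i‖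
          (hharm (u i)) (hbdd (u i)) x
        refine hmart.submartingale.exists_ae_tendsto_of_bdd (R := ‖u i‖₊) fun n => ?_
        have h := eLpNorm_le_of_ae_bound (μ := P x) (p := 1)
          (f := fun ω : ℕ → X => fI (u i) (ω n)) (C := ‖u i‖)
          (Eventually.of_forall fun ω => by
            rw [Real.norm_eq_abs]; exact hbdd (u i) (ω n))
        rw [measure_univ] at h
        exact (show _ ≤ ‖u i‖ₑ by simpa [ofReal_norm] using h)
      have := ae_all_iff.mpr hall
      exact this.mono fun ω hω => mem_iInter.mpr fun i => hω i
    constructor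
    · filter_upwards [hGae] with ω hω
      refine ⟨hκbar_prob ω hω, fun φ => ?_⟩
      rw [hκbar_int ω hω φ]
      exact hLf_tendsto ω hω φ
    · intro φ
      have hDCT := tendsto_integral_of_dominated_convergence
        (F := fun n (ω : ℕ → X) => fI φ (ω n))
        (f := fun ω => ∫ ξ, φ ξ ∂(κbar ω)) (bound := fun _ => ‖φ‖)
        (fun n => ((measurable_of_countable (fI φ)).comp
          (measurable_pi_apply n)).aestronglyMeasurable)
        (integrable_const ‖φ‖)
        (fun n => Eventually.of_forall fun ω => by
          rw [Real.norm_eq_abs]; exact hbdd φ (ω n))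
        (by
          filter_upwards [hGae] with ω hω
          rw [hκbar_int ω hω φ]
          exact hLf_tendsto ω hω φ)
      have hconst : (fun n => ∫ ω, fI φ (ω n) ∂(P x)) = fun _ => fI φ x :=
        funext fun n => integral_eval_const p P hPprob hP (fI φ) ‖φ‖
          (hharm φ) (hbdd φ) x n
      rw [hconst] at hDCT
      exact tendsto_nhds_unique hDCT tendsto_const_nhds

end BMC
end

section
/- Proposition 3.9: Let X̄ be a Dirichlet regular compactification of the countable state space X of a Markov chain with transition probabilities p(x,·), with boundary ∂X and harmonic measures (κ_x)_{x∈X}. Suppose θ_n are Borel probability measures on X̄, each supported on X, converging weakly to a Borel probability measure θ_∞ with θ_∞(X) = 0 (i.e. θ_∞ is supported on ∂X). Then the measures κ_{θ_n} = Σ_{x∈X} θ_n({x})·κ_x (probability measures on X̄ concentrated on ∂X) also converge weakly to θ_∞. -/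
open MeasureTheory Filter Topology TopologicalSpace
open scoped ENNReal NNReal Classical

namespace BMC

/-- Proposition 3.9. Let `X̄` be a Dirichlet regular compactification of the
countable state space `X` of a Markov chain, with harmonic measures `(κ_x)`. If probability
measures `θ_n` supported on `X` converge weakly to a probability measure `θ_∞` supported on
the boundary `∂X = X̄ \ X`, then the harmonic measures `κ_{θ_n} = Σ_x θ_n({x})·κ_x` also
converge weakly to `θ_∞`. -/
theorem dirichlet_regular_convergence
    (Xb : Type*) [TopologicalSpace Xb] [CompactSpace Xb] [MetrizableSpace Xb]
    [MeasurableSpace Xb] [BorelSpace Xb]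
    (Xs : Set Xb) (hXc : Xs.Countable) (hXd : Dense Xs)
    (hXiso : ∀ x ∈ Xs, IsOpen ({x} : Set Xb))
    -- transition probabilities of the chain on X, supported on X
    (p : Xb → Measure Xb) (hp : ∀ x ∈ Xs, IsProbabilityMeasure (p x))
    (hpsupp : ∀ x ∈ Xs, p x Xs = 1)
    -- Dirichlet regularity: unique continuous harmonic extension of boundary data
    (hDir : ∀ φ : C(↥(Xsᶜ), ℝ), ∃! f : C(Xb, ℝ),
      (∀ ξ : ↥(Xsᶜ), f ξ = φ ξ) ∧ ∀ x ∈ Xs, f x = ∫ y, f y ∂(p x))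
    -- harmonic measures: κ_x is the probability measure on ∂X with ∫ f dκ_x = f(x)
    -- for every continuous function f on X̄ which is harmonic on X
    (κ : Xb → Measure Xb) (hκprob : ∀ x ∈ Xs, IsProbabilityMeasure (κ x))
    (hκbd : ∀ x ∈ Xs, κ x Xs = 0)
    (hκ : ∀ x ∈ Xs, ∀ f : C(Xb, ℝ),
      (∀ z ∈ Xs, f z = ∫ y, f y ∂(p z)) → ∫ ξ, f ξ ∂(κ x) = f x)
    -- the measures θ_n, supported on X, converge weakly to θ_∞ supported on ∂X
    (θ : ℕ → Measure Xb) (hθprob : ∀ n, IsProbabilityMeasure (θ n))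
    (hθsupp : ∀ n, θ n Xs = 1)
    (θinf : Measure Xb) (hθinfprob : IsProbabilityMeasure θinf) (hθinfbd : θinf Xs = 0)
    (hconv : ∀ φ : C(Xb, ℝ),
      Tendsto (fun n => ∫ ξ, φ ξ ∂(θ n)) atTop (𝓝 (∫ ξ, φ ξ ∂θinf))) :
    -- conclusion: κ_{θ_n} → θ_∞ weakly
    ∀ φ : C(Xb, ℝ),
      Tendsto (fun n => ∑' x : ↥Xs, (θ n {(x : Xb)}).toReal * ∫ ξ, φ ξ ∂(κ x))
        atTop (𝓝 (∫ ξ, φ ξ ∂θinf)) := by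
  intro φ
  -- restrict φ to boundary
  set φ' : C(↥(Xsᶜ), ℝ) := φ.comp ⟨Subtype.val, continuous_subtype_val⟩ with hφ'
  obtain ⟨f, ⟨hfb, hfh⟩, -⟩ := hDir φ'
  have hXsm : MeasurableSet Xs := hXc.measurableSet
  -- f agrees with φ on the boundary
  have hfeq : ∀ ξ ∈ Xsᶜ, f ξ = φ ξ := fun ξ hξ => hfb ⟨ξ, hξ⟩
  -- f has compact support
  have hfc : HasCompactSupport f :=
    IsCompact.of_isClosed_subset isCompact_univ (isClosed_tsupport f) (Set.subset_univ _)
  -- Step 1: ∫ φ dκ_x = f x for x ∈ Xs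
  have key : ∀ x ∈ Xs, ∫ ξ, φ ξ ∂(κ x) = f x := by
    intro x hx
    have h1 : ∫ ξ, φ ξ ∂(κ x) = ∫ ξ, f ξ ∂(κ x) := by
      apply integral_congr_ae
      have hae : ∀ᵐ ξ ∂(κ x), ξ ∈ Xsᶜ := by
        rw [ae_iff]
        refine measure_mono_null (fun ξ hξ => ?_) (hκbd x hx)
        simpa using hξ
      filter_upwards [hae] with ξ hξ
      exact (hfeq ξ hξ).symm
    rw [h1]
    exact hκ x hx f hfh
  -- Step 2: the sum equals ∫ f dθ_n
  have sum_eq : ∀ n, (∑' x : ↥Xs, (θ n {(x : Xb)}).toReal * ∫ ξ, φ ξ ∂(κ x))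
      = ∫ ξ, f ξ ∂(θ n) := by
    intro n
    have hprob := hθprob n
    have hint : Integrable f (θ n) := f.continuous.integrable_of_hasCompactSupport hfc
    have hrestr : (θ n).restrict Xs = θ n := by
      apply Measure.restrict_eq_self_of_ae_mem
      rw [ae_iff]
      have : (θ n) Xsᶜ = 0 := by
        have := measure_compl hXsm (measure_ne_top (θ n) Xs)
        rw [hθsupp n, measure_univ] at this
        simpa using this
      refine measure_mono_null (fun ξ hξ => ?_) this
      simpa using hξ
    have := setIntegral_countable f hXc hint.integrableOn
    rw [hrestr] at this
    rw [this]
    congr 1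
    funext x
    rw [key x x.2, smul_eq_mul, measureReal_def]
  -- Step 3: ∫ f dθinf = ∫ φ dθinf
  have inf_eq : ∫ ξ, f ξ ∂θinf = ∫ ξ, φ ξ ∂θinf := by
    apply integral_congr_ae
    have hae : ∀ᵐ ξ ∂θinf, ξ ∈ Xsᶜ := by
      rw [ae_iff]
      refine measure_mono_null (fun ξ hξ => ?_) hθinfbd
      simpa using hξ
    filter_upwards [hae] with ξ hξ
    exact hfeq ξ hξ
  -- conclude
  have := hconv f
  rw [inf_eq] at this
  simpa only [sum_eq] using this

end BMC
end

section
/- Corollary 3.10: Let X̄ be a Dirichlet regular compactification of the countable state space X of a Markov chain with transition probabilities p(x,·), with boundary ∂X and harmonic measures (κ_x)_{x∈X}. Let θ_n be Borel probability measures on X̄, each supported on X, which escape to infinity: θ_n({x}) → 0 for every x ∈ X. Then the sequence (θ_n) converges weakly in the space of probability measures on X̄ if and only if the sequence κ_{θ_n} = Σ_{x∈X} θ_n({x})·κ_x converges weakly; in that case the two limits coincide and are supported on ∂X. -/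
open MeasureTheory Filter Topology TopologicalSpace
open scoped ENNReal NNReal Classical

namespace BMC

/-- Corollary 3.10. In a Dirichlet regular compactification, if probability
measures `θ_n` supported on `X` escape to infinity, then `(θ_n)` converges weakly iff the
harmonic measures `κ_{θ_n} = Σ_x θ_n({x})·κ_x` converge weakly; in that case the two limits
coincide and are supported on the boundary `∂X`. -/
theorem dirichlet_regular_escape_iff
    (Xb : Type*) [TopologicalSpace Xb] [CompactSpace Xb] [MetrizableSpace Xb]
    [MeasurableSpace Xb] [BorelSpace Xb]
    (Xs : Set Xb) (hXc : Xs.Countable) (hXd : Dense Xs)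
    (hXiso : ∀ x ∈ Xs, IsOpen ({x} : Set Xb))
    (p : Xb → Measure Xb) (hp : ∀ x ∈ Xs, IsProbabilityMeasure (p x))
    (hpsupp : ∀ x ∈ Xs, p x Xs = 1)
    (hDir : ∀ φ : C(↥(Xsᶜ), ℝ), ∃! f : C(Xb, ℝ),
      (∀ ξ : ↥(Xsᶜ), f ξ = φ ξ) ∧ ∀ x ∈ Xs, f x = ∫ y, f y ∂(p x))
    (κ : Xb → Measure Xb) (hκprob : ∀ x ∈ Xs, IsProbabilityMeasure (κ x))
    (hκbd : ∀ x ∈ Xs, κ x Xs = 0)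
    (hκ : ∀ x ∈ Xs, ∀ f : C(Xb, ℝ),
      (∀ z ∈ Xs, f z = ∫ y, f y ∂(p z)) → ∫ ξ, f ξ ∂(κ x) = f x)
    (θ : ℕ → Measure Xb) (hθprob : ∀ n, IsProbabilityMeasure (θ n))
    (hθsupp : ∀ n, θ n Xs = 1)
    -- escape to infinity
    (hesc : ∀ x ∈ Xs, Tendsto (fun n => θ n {x}) atTop (𝓝 0)) :
    -- (θ_n) converges weakly iff (κ_{θ_n}) converges weakly ...
    ((∃ μ : Measure Xb, IsProbabilityMeasure μ ∧
        ∀ φ : C(Xb, ℝ),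
          Tendsto (fun n => ∫ ξ, φ ξ ∂(θ n)) atTop (𝓝 (∫ ξ, φ ξ ∂μ)))
      ↔ (∃ μ : Measure Xb, IsProbabilityMeasure μ ∧
        ∀ φ : C(Xb, ℝ),
          Tendsto (fun n => ∑' x : ↥Xs, (θ n {(x : Xb)}).toReal * ∫ ξ, φ ξ ∂(κ x))
            atTop (𝓝 (∫ ξ, φ ξ ∂μ)))) ∧
    -- ... and in that case the limits coincide and are supported on the boundary
    (∀ μ ν : Measure Xb, IsProbabilityMeasure μ → IsProbabilityMeasure ν →
      (∀ φ : C(Xb, ℝ),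
        Tendsto (fun n => ∫ ξ, φ ξ ∂(θ n)) atTop (𝓝 (∫ ξ, φ ξ ∂μ))) →
      (∀ φ : C(Xb, ℝ),
        Tendsto (fun n => ∑' x : ↥Xs, (θ n {(x : Xb)}).toReal * ∫ ξ, φ ξ ∂(κ x))
          atTop (𝓝 (∫ ξ, φ ξ ∂ν))) →
      μ = ν ∧ μ Xs = 0) := by
  classical
  have hXsm : MeasurableSet Xs := hXc.measurableSet
  -- integrability of continuous maps
  have hint : ∀ (σ : Measure Xb), IsProbabilityMeasure σ → ∀ f : C(Xb, ℝ),
      Integrable f σ := by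
    intro σ hσ f
    have := (BoundedContinuousFunction.mkOfCompact f).integrable σ
    exact this
  -- θ n gives no mass to the boundary
  have hθcompl : ∀ n, θ n Xsᶜ = 0 := by
    intro n
    have := measure_compl hXsm (measure_ne_top (θ n) Xs)
    rw [hθsupp n, measure_univ] at this
    simpa using this
  have hres : ∀ n, (θ n).restrict Xs = θ n := by
    intro n
    exact Measure.restrict_eq_self_of_ae_mem (by
      rw [Filter.eventually_iff, mem_ae_iff]
      simpa using hθcompl n)
  -- integral against θ n as a sum over the countable set Xs
  have hsum : ∀ n (f : C(Xb, ℝ)),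
      (∑' x : ↥Xs, (θ n {(x : Xb)}).toReal * f x) = ∫ ξ, f ξ ∂(θ n) := by
    intro n f
    have hf : IntegrableOn (fun ξ => f ξ) Xs (θ n) := by
      rw [IntegrableOn, hres n]; exact hint _ (hθprob n) f
    have := setIntegral_countable (fun ξ => f ξ) hXc hf
    rw [hres n] at this
    rw [this]; exact tsum_congr fun x => (smul_eq_mul _ _).symm
  -- integrals of continuous functions vanishing on the boundary tend to 0
  have hvan : ∀ g : C(Xb, ℝ), (∀ ξ ∈ Xsᶜ, g ξ = 0) →
      Tendsto (fun n => ∫ ξ, g ξ ∂(θ n)) atTop (𝓝 0) := by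
    intro g hg
    rw [NormedAddCommGroup.tendsto_nhds_zero]
    intro ε hε
    set M : ℝ := ‖BoundedContinuousFunction.mkOfCompact g‖ with hMdef
    have hM0 : 0 ≤ M := norm_nonneg _
    have hMle : ∀ ξ : Xb, |g ξ| ≤ M := by
      intro ξ
      have := (BoundedContinuousFunction.mkOfCompact g).norm_coe_le_norm ξ
      simpa [Real.norm_eq_abs, hMdef] using this
    set K : Set Xb := {ξ : Xb | ε / 2 ≤ |g ξ|} with hKdef
    have hKclosed : IsClosed K :=
      isClosed_le continuous_const (continuous_abs.comp g.continuous)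
    have hKXs : K ⊆ Xs := by
      intro ξ hξ
      by_contra hc
      have h0 : g ξ = 0 := hg ξ hc
      have : ε / 2 ≤ |g ξ| := hξ
      rw [h0] at this
      simp only [abs_zero] at this
      linarith
    -- K is finite
    have hKfin : K.Finite := by
      have hKcomp : IsCompact K := hKclosed.isCompact
      obtain ⟨t, ht⟩ := hKcomp.elim_finite_subcover
        (fun x : ↥Xs => ({(x : Xb)} : Set Xb)) (fun x => hXiso x x.2)
        (by intro ξ hξ; exact Set.mem_iUnion.mpr ⟨⟨ξ, hKXs hξ⟩, rfl⟩)
      exact Set.Finite.subset (t.finite_toSet.biUnion fun _ _ => Set.finite_singleton _) ht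
    have hKmeas : MeasurableSet K := hKfin.measurableSet
    set F : Finset Xb := hKfin.toFinset with hFdef
    -- the finite sum of masses tends to 0
    have hsum0 : Tendsto (fun n => ∑ x ∈ F, (θ n {x}).toReal) atTop (𝓝 0) := by
      have : Tendsto (fun n => ∑ x ∈ F, (θ n {x}).toReal) atTop
          (𝓝 (∑ x ∈ F, (0 : ℝ))) := by
        apply tendsto_finset_sum
        intro x hx
        have hxXs : x ∈ Xs := hKXs (by simpa [hFdef] using hx)
        have h1 : Tendsto (fun n => θ n {x}) atTop (𝓝 0) := hesc x hxXs
        have := (ENNReal.tendsto_toReal (by simp : (0 : ℝ≥0∞) ≠ ⊤)).comp h1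
        simpa [Function.comp_def] using this
      simpa using this
    have hsmall : ∀ᶠ n in atTop, M * (∑ x ∈ F, (θ n {x}).toReal) < ε / 2 := by
      have := hsum0.const_mul M
      rw [mul_zero] at this
      exact this.eventually_lt_const (by linarith)
    filter_upwards [hsmall] with n hn
    -- pointwise bound
    have hpt : ∀ ξ : Xb, ‖g ξ‖ ≤ ε / 2 + M * K.indicator (fun _ => (1 : ℝ)) ξ := by
      intro ξ
      by_cases hξ : ξ ∈ K
      · have := hMle ξ
        simp only [Set.indicator_of_mem hξ, mul_one, Real.norm_eq_abs]
        linarith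
      · have : ¬ (ε / 2 ≤ |g ξ|) := hξ
        simp only [Set.indicator_of_notMem hξ, mul_zero, add_zero, Real.norm_eq_abs]
        linarith
    have hIind : Integrable (fun ξ => ε / 2 + M * K.indicator (fun _ => (1 : ℝ)) ξ) (θ n) := by
      apply Integrable.add (integrable_const _)
      exact ((integrable_const (1 : ℝ)).indicator hKmeas).const_mul M
    have hbound : ‖∫ ξ, g ξ ∂(θ n)‖ ≤ ε / 2 + M * (θ n K).toReal := by
      calc ‖∫ ξ, g ξ ∂(θ n)‖ ≤ ∫ ξ, ‖g ξ‖ ∂(θ n) := norm_integral_le_integral_norm _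
        _ ≤ ∫ ξ, (ε / 2 + M * K.indicator (fun _ => (1 : ℝ)) ξ) ∂(θ n) := by
            apply integral_mono ((hint _ (hθprob n) g).norm) hIind hpt
        _ = ε / 2 + M * (θ n K).toReal := by
            rw [integral_add (integrable_const _)
              (((integrable_const (1 : ℝ)).indicator hKmeas).const_mul M),
              integral_const, integral_const_mul, integral_indicator_const (1 : ℝ) hKmeas]
            haveI := hθprob n
            simp [measure_univ, measureReal_def]
    -- the mass of K is controlled by the finite sum
    have hKle : (θ n K).toReal ≤ ∑ x ∈ F, (θ n {x}).toReal := by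
      have h1 : θ n K ≤ ∑ x ∈ F, θ n {x} := by
        have hKeq : K = ⋃ x ∈ F, ({x} : Set Xb) := by
          simp [hFdef, Set.biUnion_of_singleton, Set.Finite.coe_toFinset]
        rw [hKeq]
        exact measure_biUnion_finset_le F _
      have h2 : (∑ x ∈ F, θ n {x}).toReal = ∑ x ∈ F, (θ n {x}).toReal :=
        ENNReal.toReal_sum fun x _ => measure_ne_top _ _
      rw [← h2]
      exact ENNReal.toReal_mono (by
        rw [← h2] at *
        exact (ENNReal.sum_lt_top.mpr fun x _ => measure_lt_top _ _).ne) h1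
    calc ‖∫ ξ, g ξ ∂(θ n)‖ ≤ ε / 2 + M * (θ n K).toReal := hbound
      _ ≤ ε / 2 + M * (∑ x ∈ F, (θ n {x}).toReal) := by
          have := mul_le_mul_of_nonneg_left hKle hM0
          linarith
      _ < ε / 2 + ε / 2 := by linarith
      _ = ε := by ring
  -- harmonic extension of a continuous function
  have hext : ∀ φ : C(Xb, ℝ), ∃ f : C(Xb, ℝ),
      (∀ ξ ∈ Xsᶜ, f ξ = φ ξ) ∧ (∀ x ∈ Xs, f x = ∫ y, f y ∂(p x)) := by
    intro φ
    obtain ⟨f, ⟨hfb, hfh⟩, -⟩ := hDir (φ.comp ⟨Subtype.val, continuous_subtype_val⟩)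
    exact ⟨f, fun ξ hξ => hfb ⟨ξ, hξ⟩, hfh⟩
  -- the key asymptotic identity
  have hkey : ∀ φ : C(Xb, ℝ),
      Tendsto (fun n => (∑' x : ↥Xs, (θ n {(x : Xb)}).toReal * ∫ ξ, φ ξ ∂(κ x))
        - ∫ ξ, φ ξ ∂(θ n)) atTop (𝓝 0) := by
    intro φ
    obtain ⟨f, hfb, hfh⟩ := hext φ
    have hκφ : ∀ x : ↥Xs, ∫ ξ, φ ξ ∂(κ (x : Xb)) = f x := by
      rintro ⟨x, hx⟩
      have h1 : ∫ ξ, φ ξ ∂(κ x) = ∫ ξ, f ξ ∂(κ x) := by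
        apply integral_congr_ae
        have hae : ∀ᵐ ξ ∂(κ x), ξ ∈ Xsᶜ := by
          rw [Filter.eventually_iff, mem_ae_iff]
          show (κ x) Xsᶜᶜ = 0
          rw [compl_compl]; exact hκbd x hx
        filter_upwards [hae] with ξ hξ
        exact (hfb ξ hξ).symm
      rw [h1, hκ x hx f hfh]
    have hSn : ∀ n, (∑' x : ↥Xs, (θ n {(x : Xb)}).toReal * ∫ ξ, φ ξ ∂(κ x))
        = ∫ ξ, f ξ ∂(θ n) := by
      intro n
      rw [tsum_congr fun x => by rw [hκφ x]]
      exact hsum n f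
    have hdiff : ∀ n, (∑' x : ↥Xs, (θ n {(x : Xb)}).toReal * ∫ ξ, φ ξ ∂(κ x))
        - ∫ ξ, φ ξ ∂(θ n) = ∫ ξ, (f - φ) ξ ∂(θ n) := by
      intro n
      rw [hSn n, ← integral_sub (hint _ (hθprob n) f) (hint _ (hθprob n) φ)]
      rfl
    have hvanish : Tendsto (fun n => ∫ ξ, (f - φ) ξ ∂(θ n)) atTop (𝓝 0) := by
      apply hvan
      intro ξ hξ
      simp [ContinuousMap.sub_apply, hfb ξ hξ]
    simpa only [hdiff] using hvanish
  constructor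
  · constructor
    · rintro ⟨μ, hμ, hconv⟩
      refine ⟨μ, hμ, fun φ => ?_⟩
      have := (hkey φ).add (hconv φ)
      simpa using this
    · rintro ⟨μ, hμ, hconv⟩
      refine ⟨μ, hμ, fun φ => ?_⟩
      have := (hconv φ).sub (hkey φ)
      simpa using this
  · intro μ ν hμ hν hconvθ hconvκ
    have hXsc : Countable ↥Xs := hXc.to_subtype
    -- the integrals of continuous functions agree
    have hinteq : ∀ φ : C(Xb, ℝ), ∫ ξ, φ ξ ∂μ = ∫ ξ, φ ξ ∂ν := by
      intro φ
      have h1 : Tendsto (fun n => ∑' x : ↥Xs, (θ n {(x : Xb)}).toReal * ∫ ξ, φ ξ ∂(κ x))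
          atTop (𝓝 (∫ ξ, φ ξ ∂μ)) := by
        have := (hkey φ).add (hconvθ φ)
        simpa using this
      exact tendsto_nhds_unique h1 (hconvκ φ)
    constructor
    · -- μ = ν via bounded continuous ℝ≥0-valued functions
      apply ext_of_forall_lintegral_eq_of_IsFiniteMeasure
      intro f
      have hcont : Continuous fun x : Xb => ((f x : ℝ)) :=
        NNReal.continuous_coe.comp f.continuous
      have heq := hinteq ⟨fun x => ((f x : ℝ)), hcont⟩
      simp only [ContinuousMap.coe_mk] at heq
      have h1 := BoundedContinuousFunction.toReal_lintegral_coe_eq_integral f μ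
      have h2 := BoundedContinuousFunction.toReal_lintegral_coe_eq_integral f ν
      have h3 : (∫⁻ x, (f x : ℝ≥0∞) ∂μ).toReal = (∫⁻ x, (f x : ℝ≥0∞) ∂ν).toReal := by
        rw [h1, h2]; exact heq
      exact (ENNReal.toReal_eq_toReal_iff'
        (BoundedContinuousFunction.lintegral_lt_top_of_nnreal μ f).ne
        (BoundedContinuousFunction.lintegral_lt_top_of_nnreal ν f).ne).mp h3
    · -- μ gives no mass to Xs
      have hpt : ∀ x ∈ Xs, μ {x} = 0 := by
        intro x hx
        have hclopen : IsClopen ({x} : Set Xb) := ⟨isClosed_singleton, hXiso x hx⟩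
        set φ : C(Xb, ℝ) := (BoundedContinuousFunction.indicator {x} hclopen).toContinuousMap
          with hφdef
        have hφeq : ∀ (σ : Measure Xb), ∫ ξ, φ ξ ∂σ = (σ {x}).toReal := by
          intro σ
          have : ∫ ξ, φ ξ ∂σ = ∫ ξ, Set.indicator {x} (fun _ => (1 : ℝ)) ξ ∂σ := by
            apply integral_congr_ae
            filter_upwards with ξ
            simp [hφdef, BoundedContinuousFunction.indicator]
          rw [this, integral_indicator_const (1 : ℝ) (measurableSet_singleton x)]
          simp [measureReal_def]
        have h1 : Tendsto (fun n => ∫ ξ, φ ξ ∂(θ n)) atTop (𝓝 (∫ ξ, φ ξ ∂μ)) := hconvθ φ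
        have h2 : Tendsto (fun n => (θ n {x}).toReal) atTop (𝓝 0) := by
          have := (ENNReal.tendsto_toReal (by simp : (0 : ℝ≥0∞) ≠ ⊤)).comp (hesc x hx)
          simpa [Function.comp_def] using this
        have h3 : Tendsto (fun n => ∫ ξ, φ ξ ∂(θ n)) atTop (𝓝 0) := by
          simpa only [hφeq] using h2
        have h4 : ∫ ξ, φ ξ ∂μ = 0 := tendsto_nhds_unique h1 h3
        rw [hφeq μ] at h4
        exact (ENNReal.toReal_eq_zero_iff _).mp h4 |>.resolve_right (measure_ne_top μ _)
      have h5 : μ Xs ≤ ∑' x : ↥Xs, μ {(x : Xb)} := by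
        have hcover : Xs ⊆ ⋃ x : ↥Xs, ({(x : Xb)} : Set Xb) := by
          intro ξ hξ; exact Set.mem_iUnion.mpr ⟨⟨ξ, hξ⟩, rfl⟩
        exact (measure_mono hcover).trans (measure_iUnion_le _)
      have h6 : (∑' x : ↥Xs, μ {(x : Xb)}) = 0 := by
        rw [tsum_congr fun x : ↥Xs => hpt x x.2]
        simp
      exact le_antisymm (h5.trans h6.le) (by simp)

end BMC
end
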